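/- Let Θ = [−a,a]^d × Ω be the parameter space of the location-scale Gaussian family, let k ≥ k0 ≥ 1, let G0 ∈ E_{k0}(Θ), and set r̄ = r̄(k − k0 + 1) (with r̄ = 1 if k = k0). Then there exists a constant c > 0, depending only on G0, k, d and the diameter of Θ, such that for all G ∈ O_k(Θ): D̄(G, G0) ≥ c · W_{r̄}^{r̄}(G, G0), where the Wasserstein distance is taken with respect to the ground metric D((μ,Σ),(μ',Σ')) = ‖μ − μ'‖ + ‖Σ − Σ'‖ on Θ. -/

import Mathlib

open MeasureTheory

attribute [local instance] Classical.propDecidable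

/-- A finite mixing measure: positive weights `p` summing to one over distinct atoms. -/
structure MixingMeasure (E : Type*) where
  order : ℕ
  p : Fin order → ℝ
  atom : Fin order → E
  p_pos : ∀ i, 0 < p i
  p_sum : ∑ i, p i = 1
  atom_inj : Function.Injective atom

namespace MixingMeasure

/-- `G ∈ O_k(Θ)`: mixing measures of order at most `k` supported in `Θ`. -/
def memO {E : Type*} (G : MixingMeasure E) (k : ℕ) (Θ : Set E) : Prop :=
  G.order ≤ k ∧ ∀ i, G.atom i ∈ Θ

/-- `G ∈ E_k(Θ)`: mixing measures of order exactly `k` supported in `Θ`. -/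
def memE {E : Type*} (G : MixingMeasure E) (k : ℕ) (Θ : Set E) : Prop :=
  G.order = k ∧ ∀ i, G.atom i ∈ Θ

/-- `G ∈ O_{k,c0}(Θ)`: order at most `k`, support in `Θ`, weights at least `c0`. -/
def memOc {E : Type*} (G : MixingMeasure E) (k : ℕ) (c0 : ℝ) (Θ : Set E) : Prop :=
  G.memO k Θ ∧ ∀ i, c0 ≤ G.p i

/-- Two mixing measures represent the same measure (equal up to relabelling). -/
def MixEq {E : Type*} (G G' : MixingMeasure E) : Prop :=
  ∃ e : Fin G.order ≃ Fin G'.order, ∀ i, G'.atom (e i) = G.atom i ∧ G'.p (e i) = G.p i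

end MixingMeasure

/-- The mixture density `p_G`. -/
noncomputable def mixDensity {E X : Type*} (f : E → X → ℝ) (G : MixingMeasure E) (x : X) : ℝ :=
  ∑ i, G.p i * f (G.atom i) x

/-- The distribution of an i.i.d. sample of size `n` from the density `g` w.r.t. `ν`. -/
noncomputable def sampleMeasure {X : Type*} [MeasurableSpace X] (ν : Measure X) (g : X → ℝ)
    (n : ℕ) : Measure (Fin n → X) :=
  Measure.pi fun _ => ν.withDensity fun x => ENNReal.ofReal (g x)

/-- The log-likelihood `ℓ_n(G)` of the sample `xs`. -/
noncomputable def logLik {E X : Type*} (f : E → X → ℝ) {n : ℕ} (xs : Fin n → X)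
    (G : MixingMeasure E) : ℝ :=
  ∑ i, Real.log (mixDensity f G (xs i))

/-- The penalty `ρ(G) = Σ_j log p_j`. -/
noncomputable def penalty {E : Type*} (G : MixingMeasure E) : ℝ :=
  ∑ i, Real.log (G.p i)

/-- Voronoi cell `A_j(G)` generated by the atoms of `G0`, with respect to the
ground distance `D`. -/
noncomputable def voronoiD {E : Type*} (D : E → E → ℝ) (G G0 : MixingMeasure E)
    (j : Fin G0.order) : Finset (Fin G.order) :=
  Finset.univ.filter fun i => ∀ l, D (G.atom i) (G0.atom j) ≤ D (G.atom i) (G0.atom l)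

/-- The set of couplings between the weights of two mixing measures. -/
def couplings {E : Type*} (G G' : MixingMeasure E) : Set (Fin G.order → Fin G'.order → ℝ) :=
  {q | (∀ i j, 0 ≤ q i j) ∧ (∀ i, ∑ j, q i j = G.p i) ∧ (∀ j, ∑ i, q i j = G'.p j)}

/-- The `r`-th power `W_r^r` of the order-`r` Wasserstein distance between mixing
measures, with ground distance `D`. -/
noncomputable def wassersteinPow {E : Type*} (D : E → E → ℝ) (r : ℕ)
    (G G' : MixingMeasure E) : ℝ :=
  sInf {c | ∃ q ∈ couplings G G', c = ∑ i, ∑ j, q i j * D (G.atom i) (G'.atom j) ^ r}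

/-- The parameter of a location-scale Gaussian: a mean vector and a covariance matrix. -/
abbrev GaussParam (d : ℕ) := (Fin d → ℝ) × Matrix (Fin d) (Fin d) ℝ

/-- Euclidean norm of a vector. -/
noncomputable def vecNorm {d : ℕ} (v : Fin d → ℝ) : ℝ := Real.sqrt (∑ i, v i ^ 2)

/-- Frobenius norm of a matrix. -/
noncomputable def matNorm {d : ℕ} (M : Matrix (Fin d) (Fin d) ℝ) : ℝ :=
  Real.sqrt (∑ i, ∑ j, M i j ^ 2)

/-- The ground metric `D((μ,Σ), (μ',Σ')) = ‖μ - μ'‖ + ‖Σ - Σ'‖` on `GaussParam d`. -/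
noncomputable def gDist {d : ℕ} (θ θ' : GaussParam d) : ℝ :=
  vecNorm (θ.1 - θ'.1) + matNorm (θ.2 - θ'.2)

/-- The `d`-dimensional Gaussian density with mean `θ.1` and covariance `θ.2`. -/
noncomputable def gaussDensity {d : ℕ} (θ : GaussParam d) (x : Fin d → ℝ) : ℝ :=
  (Real.sqrt ((2 * Real.pi) ^ d * θ.2.det))⁻¹ *
    Real.exp (-dotProduct (x - θ.1) (θ.2⁻¹.mulVec (x - θ.1)) / 2)

/-- The system of polynomial equations (8) admits a nontrivial solution: all `c_j` are
nonzero and at least one `a_j` is nonzero. -/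
def hasNontrivialSol (k' r : ℕ) : Prop :=
  ∃ a b c : Fin k' → ℝ, (∀ j, c j ≠ 0) ∧ (∃ j, a j ≠ 0) ∧
    ∀ α ∈ Finset.Icc 1 r,
      ∑ j, ∑ nn ∈ (Finset.range (α + 1) ×ˢ Finset.range (α + 1)).filter
          (fun nn : ℕ × ℕ => nn.1 + 2 * nn.2 = α),
        c j ^ 2 * a j ^ nn.1 * b j ^ nn.2 / (nn.1.factorial * nn.2.factorial : ℝ) = 0

/-- `r̄(k')`: the smallest integer `r ≥ 1` such that the system (8) has no nontrivial
solution. -/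
noncomputable def rbar (k' : ℕ) : ℕ := sInf {r : ℕ | 1 ≤ r ∧ ¬hasNontrivialSol k' r}

/-- The loss function `𝒟̄(G, G0)` for location-scale Gaussian mixtures. -/
noncomputable def lossDbar {d : ℕ} (G G0 : MixingMeasure (GaussParam d)) : ℝ :=
  (∑ j, if (voronoiD gDist G G0 j).card = 1
      then ∑ i ∈ voronoiD gDist G G0 j, G.p i *
        (vecNorm ((G.atom i).1 - (G0.atom j).1) + matNorm ((G.atom i).2 - (G0.atom j).2))
      else if 1 < (voronoiD gDist G G0 j).card
      then ∑ i ∈ voronoiD gDist G G0 j, G.p i *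
        (vecNorm ((G.atom i).1 - (G0.atom j).1) ^ (rbar (voronoiD gDist G G0 j).card : ℝ)
          + matNorm ((G.atom i).2 - (G0.atom j).2) ^ ((rbar (voronoiD gDist G G0 j).card : ℝ) / 2))
      else 0)
  + ∑ j, |(∑ i ∈ voronoiD gDist G G0 j, G.p i) - G0.p j|

/-- The parameter space `Θ = [-a,a]^d × Ω` of the location-scale Gaussian family. -/
def gaussTheta {d : ℕ} (a : ℝ) (Ω : Set (Matrix (Fin d) (Fin d) ℝ)) : Set (GaussParam d) :=
  {θ | (∀ i, θ.1 i ∈ Set.Icc (-a) a) ∧ θ.2 ∈ Ω}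

/-- `Ω` is a compact set of symmetric matrices whose eigenvalues lie in a closed
interval contained in `(0, ∞)`. -/
def goodScaleSet {d : ℕ} (Ω : Set (Matrix (Fin d) (Fin d) ℝ)) : Prop :=
  IsCompact Ω ∧ ∃ lo hi : ℝ, 0 < lo ∧ lo ≤ hi ∧
    ∀ M ∈ Ω, M.IsSymm ∧ ∀ v : Fin d → ℝ,
      lo * dotProduct v v ≤ dotProduct v (M.mulVec v) ∧
      dotProduct v (M.mulVec v) ≤ hi * dotProduct v v

namespace MH

/-- Taylor coefficients of `exp (a t + b t^2)`. -/
noncomputable def hc (a b : ℝ) (n : ℕ) : ℝ :=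
  ∑ nn ∈ (Finset.range (n + 1) ×ˢ Finset.range (n + 1)).filter
      (fun nn : ℕ × ℕ => nn.1 + 2 * nn.2 = n),
    a ^ nn.1 * b ^ nn.2 / (nn.1.factorial * nn.2.factorial : ℝ)

def derS (f : ℕ → ℝ) : ℕ → ℝ := fun n => (n + 1 : ℝ) * f (n + 1)

def xmul (f : ℕ → ℝ) : ℕ → ℝ := fun n => match n with
  | 0 => 0
  | m + 1 => f m

lemma hc_zero (a b : ℝ) : hc a b 0 = 1 := by
  have h : (Finset.range 1 ×ˢ Finset.range 1).filter
      (fun nn : ℕ × ℕ => nn.1 + 2 * nn.2 = 0) = {(0,0)} := by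
    ext ⟨x, y⟩
    simp only [Finset.mem_filter, Finset.mem_product, Finset.mem_range, Finset.mem_singleton,
      Prod.mk.injEq]
    omega
  rw [hc, h]
  norm_num

lemma hc_one (a b : ℝ) : hc a b 1 = a := by
  have h : (Finset.range 2 ×ˢ Finset.range 2).filter
      (fun nn : ℕ × ℕ => nn.1 + 2 * nn.2 = 1) = {(1,0)} := by
    ext ⟨x, y⟩
    simp only [Finset.mem_filter, Finset.mem_product, Finset.mem_range, Finset.mem_singleton,
      Prod.mk.injEq]
    omega
  rw [hc, h]
  norm_num

lemma hc_zero_zero (n : ℕ) (hn : n ≠ 0) : hc 0 0 n = 0 := by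
  apply Finset.sum_eq_zero
  intro nn hnn
  rw [Finset.mem_filter] at hnn
  rcases Nat.eq_zero_or_pos nn.1 with h1 | h1
  · have h2 : nn.2 ≠ 0 := by omega
    simp [zero_pow h2]
  · have h1' : nn.1 ≠ 0 := by omega
    simp [zero_pow h1']

lemma hc_rec (a b : ℝ) : derS (hc a b) = fun n => a * hc a b n + 2 * b * xmul (hc a b) n := by
  funext n
  match n with
  | 0 => simp [derS, hc_one, hc_zero, xmul]
  | Nat.succ m =>
    show ((m + 1 : ℕ) + 1 : ℝ) * hc a b (m + 1 + 1) = a * hc a b (m + 1) + 2 * b * hc a b m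
    have key : ((m + 1 : ℕ) + 1 : ℝ) * hc a b (m + 1 + 1) =
        (∑ nn ∈ (Finset.range (m + 3) ×ˢ Finset.range (m + 3)).filter
          (fun nn : ℕ × ℕ => nn.1 + 2 * nn.2 = m + 2),
          (nn.1 : ℝ) * (a ^ nn.1 * b ^ nn.2 / (nn.1.factorial * nn.2.factorial : ℝ)))
        + (∑ nn ∈ (Finset.range (m + 3) ×ˢ Finset.range (m + 3)).filter
          (fun nn : ℕ × ℕ => nn.1 + 2 * nn.2 = m + 2),
          ((2 * nn.2 : ℕ) : ℝ) * (a ^ nn.1 * b ^ nn.2 / (nn.1.factorial * nn.2.factorial : ℝ))) := by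
      rw [hc, Finset.mul_sum, ← Finset.sum_add_distrib]
      apply Finset.sum_congr rfl
      intro nn hnn
      rw [Finset.mem_filter] at hnn
      have : ((m + 1 : ℕ) + 1 : ℝ) = (nn.1 : ℝ) + ((2 * nn.2 : ℕ) : ℝ) := by
        push_cast; exact_mod_cast by exact_mod_cast congrArg (Nat.cast (R := ℝ)) hnn.2.symm
      rw [this]; ring
    rw [key]
    congr 1
    · rw [show a * hc a b (m + 1) = ∑ nn ∈ (Finset.range (m + 2) ×ˢ Finset.range (m + 2)).filter
          (fun nn : ℕ × ℕ => nn.1 + 2 * nn.2 = m + 1),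
          a * (a ^ nn.1 * b ^ nn.2 / (nn.1.factorial * nn.2.factorial : ℝ)) from by
        rw [hc, Finset.mul_sum]]
      rw [← Finset.sum_filter_of_ne (p := fun nn : ℕ × ℕ => nn.1 ≠ 0)
        (by intro x hx hfx; intro h0; rw [h0] at hfx; simp at hfx)]
      apply Finset.sum_nbij' (fun nn : ℕ × ℕ => (nn.1 - 1, nn.2))
        (fun nn : ℕ × ℕ => (nn.1 + 1, nn.2))
      · intro nn hnn
        simp only [Finset.mem_filter, Finset.mem_product, Finset.mem_range] at hnn ⊢
        omega
      · intro nn hnn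
        simp only [Finset.mem_filter, Finset.mem_product, Finset.mem_range] at hnn ⊢
        omega
      · intro nn hnn
        simp only [Finset.mem_filter, Finset.mem_product, Finset.mem_range] at hnn
        have : nn.1 - 1 + 1 = nn.1 := by omega
        simp [this]
      · intro nn hnn; simp
      · intro nn hnn
        simp only [Finset.mem_filter, Finset.mem_product, Finset.mem_range] at hnn
        obtain ⟨n1, hn1⟩ : ∃ n1, nn.1 = n1 + 1 := ⟨nn.1 - 1, by omega⟩
        rcases nn with ⟨x1, x2⟩
        simp only at hn1 ⊢
        subst hn1
        simp only [Nat.add_sub_cancel]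
        rw [Nat.factorial_succ, pow_succ]
        have h1 : (n1.factorial : ℝ) ≠ 0 := Nat.cast_ne_zero.mpr n1.factorial_ne_zero
        have h2 : (x2.factorial : ℝ) ≠ 0 := Nat.cast_ne_zero.mpr x2.factorial_ne_zero
        push_cast
        field_simp
    · rw [show (2 : ℝ) * b * hc a b m = ∑ nn ∈ (Finset.range (m + 1) ×ˢ Finset.range (m + 1)).filter
          (fun nn : ℕ × ℕ => nn.1 + 2 * nn.2 = m),
          2 * b * (a ^ nn.1 * b ^ nn.2 / (nn.1.factorial * nn.2.factorial : ℝ)) from by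
        rw [hc, Finset.mul_sum]]
      rw [← Finset.sum_filter_of_ne (p := fun nn : ℕ × ℕ => nn.2 ≠ 0)
        (by intro x hx hfx; intro h0; rw [h0] at hfx; simp at hfx)]
      apply Finset.sum_nbij' (fun nn : ℕ × ℕ => (nn.1, nn.2 - 1))
        (fun nn : ℕ × ℕ => (nn.1, nn.2 + 1))
      · intro nn hnn
        simp only [Finset.mem_filter, Finset.mem_product, Finset.mem_range] at hnn ⊢
        omega
      · intro nn hnn
        simp only [Finset.mem_filter, Finset.mem_product, Finset.mem_range] at hnn ⊢
        omega
      · intro nn hnn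
        simp only [Finset.mem_filter, Finset.mem_product, Finset.mem_range] at hnn
        have : nn.2 - 1 + 1 = nn.2 := by omega
        simp [this]
      · intro nn hnn; simp
      · intro nn hnn
        simp only [Finset.mem_filter, Finset.mem_product, Finset.mem_range] at hnn
        obtain ⟨n2, hn2⟩ : ∃ n2, nn.2 = n2 + 1 := ⟨nn.2 - 1, by omega⟩
        rcases nn with ⟨x1, x2⟩
        simp only at hn2 ⊢
        subst hn2
        simp only [Nat.add_sub_cancel]
        rw [Nat.factorial_succ, pow_succ]
        have h1 : (x1.factorial : ℝ) ≠ 0 := Nat.cast_ne_zero.mpr x1.factorial_ne_zero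
        have h2 : (n2.factorial : ℝ) ≠ 0 := Nat.cast_ne_zero.mpr n2.factorial_ne_zero
        push_cast
        field_simp

/-- Multiplication of a sequence by a polynomial (convolution). -/
noncomputable def pmul (P : Polynomial ℝ) (f : ℕ → ℝ) : ℕ → ℝ :=
  fun n => ∑ k ∈ Finset.range (n + 1), P.coeff k * f (n - k)

/-- The operator `f ↦ f' - (c + 2 e X) f` on sequences of Taylor coefficients. -/
def phi (c e : ℝ) (f : ℕ → ℝ) : ℕ → ℝ :=
  fun n => derS f n - (c * f n + 2 * e * xmul f n)

noncomputable def opP (a b c e : ℝ) (P : Polynomial ℝ) : Polynomial ℝ :=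
  Polynomial.derivative P + Polynomial.C (a - c) * P
    + Polynomial.C (2 * (b - e)) * (Polynomial.X * P)

lemma pmul_add (P Q : Polynomial ℝ) (f : ℕ → ℝ) :
    pmul (P + Q) f = fun n => pmul P f n + pmul Q f n := by
  funext n
  simp only [pmul, Polynomial.coeff_add, add_mul]
  exact Finset.sum_add_distrib

lemma pmul_Cmul (c : ℝ) (P : Polynomial ℝ) (f : ℕ → ℝ) :
    pmul (Polynomial.C c * P) f = fun n => c * pmul P f n := by
  funext n
  simp only [pmul, Polynomial.coeff_C_mul, Finset.mul_sum, mul_assoc]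

lemma derS_pmul (P : Polynomial ℝ) (f : ℕ → ℝ) :
    derS (pmul P f) = fun n => pmul (Polynomial.derivative P) f n + pmul P (derS f) n := by
  funext n
  show ((n : ℝ) + 1) * (∑ k ∈ Finset.range (n + 2), P.coeff k * f (n + 1 - k)) = _
  have key : ∀ k ∈ Finset.range (n + 2),
      ((n : ℝ) + 1) * (P.coeff k * f (n + 1 - k)) =
        (k : ℝ) * P.coeff k * f (n + 1 - k) + P.coeff k * (((n + 1 - k : ℕ) : ℝ) * f (n + 1 - k)) := by
    intro k hk
    rw [Finset.mem_range] at hk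
    have : ((n + 1 - k : ℕ) : ℝ) = (n : ℝ) + 1 - (k : ℝ) := by
      have : k ≤ n + 1 := by omega
      push_cast [this]; ring
    rw [this]; ring
  rw [Finset.mul_sum, Finset.sum_congr rfl key, Finset.sum_add_distrib]
  congr 1
  · rw [Finset.sum_range_succ']
    simp only [Nat.cast_zero, zero_mul, add_zero]
    show _ = ∑ k ∈ Finset.range (n + 1), (Polynomial.derivative P).coeff k * f (n - k)
    apply Finset.sum_congr rfl
    intro k hk
    rw [Polynomial.coeff_derivative, Nat.succ_sub_succ]
    push_cast
    ring
  · rw [Finset.sum_range_succ]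
    simp only [Nat.sub_self, Nat.cast_zero, zero_mul, mul_zero, add_zero]
    apply Finset.sum_congr rfl
    intro k hk
    rw [Finset.mem_range] at hk
    have h1 : n + 1 - k = (n - k) + 1 := by omega
    simp only [pmul, derS, h1]
    push_cast
    ring

lemma pmul_xmul (P : Polynomial ℝ) (f : ℕ → ℝ) :
    pmul (Polynomial.X * P) f = xmul (pmul P f) := by
  funext n
  match n with
  | 0 =>
    simp [pmul, xmul]
  | m + 1 =>
    show pmul (Polynomial.X * P) f (m + 1) = pmul P f m
    unfold pmul
    rw [Finset.sum_range_succ']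
    simp only [Polynomial.coeff_X_mul, Nat.succ_sub_succ]
    simp

lemma pmul_xmul' (P : Polynomial ℝ) (f : ℕ → ℝ) :
    pmul P (xmul f) = xmul (pmul P f) := by
  funext n
  match n with
  | 0 =>
    show ∑ k ∈ Finset.range 1, P.coeff k * xmul f (0 - k) = 0
    simp [xmul]
  | m + 1 =>
    show ∑ k ∈ Finset.range (m + 2), P.coeff k * xmul f (m + 1 - k) = pmul P f m
    rw [Finset.sum_range_succ]
    simp only [Nat.sub_self]
    show (∑ k ∈ Finset.range (m + 1), P.coeff k * xmul f (m + 1 - k)) + P.coeff (m+1) * (0:ℝ) = _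
    rw [mul_zero, add_zero]
    apply Finset.sum_congr rfl
    intro k hk
    rw [Finset.mem_range] at hk
    have h1 : m + 1 - k = (m - k) + 1 := by omega
    rw [h1]
    rfl

lemma phi_pmul (a b c e : ℝ) (P : Polynomial ℝ) :
    phi c e (pmul P (hc a b)) = pmul (opP a b c e P) (hc a b) := by
  funext n
  set f := hc a b with hf
  have hder : derS (pmul P f) n = pmul (Polynomial.derivative P) f n + pmul P (derS f) n := by
    rw [derS_pmul]
  have hrec : pmul P (derS f) n = a * pmul P f n + 2 * b * xmul (pmul P f) n := by
    rw [hf, hc_rec, ← hf]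
    show (∑ k ∈ Finset.range (n+1), P.coeff k * (a * f (n-k) + 2 * b * xmul f (n-k))) = _
    rw [← pmul_xmul']
    show _ = a * (∑ k ∈ Finset.range (n+1), P.coeff k * f (n-k))
      + 2 * b * (∑ k ∈ Finset.range (n+1), P.coeff k * xmul f (n-k))
    rw [Finset.mul_sum, Finset.mul_sum, ← Finset.sum_add_distrib]
    apply Finset.sum_congr rfl
    intro k hk
    ring
  show derS (pmul P f) n - (c * pmul P f n + 2 * e * xmul (pmul P f) n) = _
  rw [hder, hrec, opP, pmul_add, pmul_add, pmul_Cmul, pmul_Cmul, pmul_xmul]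
  ring

lemma phi_sum {ι : Type*} (s : Finset ι) (c e : ℝ) (g : ι → ℕ → ℝ) :
    phi c e (fun n => ∑ i ∈ s, g i n) = fun n => ∑ i ∈ s, phi c e (g i) n := by
  funext n
  have hx : xmul (fun n => ∑ i ∈ s, g i n) n = ∑ i ∈ s, xmul (g i) n := by
    match n with
    | 0 => simp [xmul]
    | m + 1 => rfl
  simp only [phi, derS, hx, Finset.mul_sum]
  rw [← Finset.sum_add_distrib, ← Finset.sum_sub_distrib]

lemma phi_vanish (c e : ℝ) (f : ℕ → ℝ) (n : ℕ) (h : ∀ j ≤ n + 1, f j = 0) :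
    ∀ j ≤ n, phi c e f j = 0 := by
  intro j hj
  have h1 : f (j + 1) = 0 := h _ (by omega)
  have h2 : f j = 0 := h _ (by omega)
  have h3 : xmul f j = 0 := by
    match j with
    | 0 => rfl
    | m + 1 => exact h _ (by omega)
  simp [phi, derS, h1, h2, h3]

lemma phi_iter_vanish (c e : ℝ) (s : ℕ) :
    ∀ (f : ℕ → ℝ) (n : ℕ), (∀ j ≤ n + s, f j = 0) → ∀ j ≤ n, (phi c e)^[s] f j = 0 := by
  induction s with
  | zero => intro f n h j hj; simpa using h j (by omega)
  | succ m ih =>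
    intro f n h j hj
    rw [Function.iterate_succ_apply]
    exact ih (phi c e f) n
      (fun j hj => phi_vanish c e f (n + m) (fun i hi => h i (by omega)) j hj) j hj

lemma opP_self (a b : ℝ) (P : Polynomial ℝ) : opP a b a b P = Polynomial.derivative P := by
  simp [opP]

lemma opP_natDegree (a b c e : ℝ) (P : Polynomial ℝ) :
    (opP a b c e P).natDegree ≤ P.natDegree + 1 := by
  apply le_trans (Polynomial.natDegree_add_le _ _)
  apply max_le
  · apply le_trans (Polynomial.natDegree_add_le _ _)
    apply max_le
    · exact le_trans (Polynomial.natDegree_derivative_le P) (by omega)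
    · exact le_trans (Polynomial.natDegree_C_mul_le _ _) (by omega)
  · apply le_trans (Polynomial.natDegree_C_mul_le _ _)
    apply le_trans (Polynomial.natDegree_mul_le)
    simp [Polynomial.natDegree_X]
    omega

lemma opP_ne_zero (a b c e : ℝ) (P : Polynomial ℝ) (hP : P ≠ 0) (hne : (a, b) ≠ (c, e)) :
    opP a b c e P ≠ 0 := by
  intro h0
  have hlc : P.coeff P.natDegree ≠ 0 := by
    rw [← Polynomial.leadingCoeff]
    exact Polynomial.leadingCoeff_ne_zero.mpr hP
  have e1 : P.coeff (P.natDegree + 1) = 0 :=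
    Polynomial.coeff_eq_zero_of_natDegree_lt (by omega)
  by_cases hbe : b = e
  · have hac : a ≠ c := fun hac => hne (by rw [hac, hbe])
    have h1 := congrArg (fun Q => Polynomial.coeff Q P.natDegree) h0
    simp only [opP, Polynomial.coeff_add, Polynomial.coeff_C_mul, hbe, sub_self, mul_zero,
      zero_mul, Polynomial.coeff_zero, add_zero] at h1
    rw [Polynomial.coeff_derivative, e1, zero_mul, zero_add] at h1
    exact (mul_ne_zero (sub_ne_zero.mpr hac) hlc) h1
  · have h1 := congrArg (fun Q => Polynomial.coeff Q (P.natDegree + 1)) h0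
    have e2 : P.coeff (P.natDegree + 1 + 1) = 0 :=
      Polynomial.coeff_eq_zero_of_natDegree_lt (by omega)
    simp only [opP, Polynomial.coeff_add, Polynomial.coeff_C_mul, Polynomial.coeff_zero,
      Polynomial.coeff_X_mul] at h1
    rw [Polynomial.coeff_derivative, e2, e1, zero_mul, mul_zero, zero_add, zero_add] at h1
    have h2 : (2 : ℝ) * (b - e) ≠ 0 := by
      intro h2; apply hbe; linarith
    exact (mul_ne_zero h2 hlc) h1

lemma pmul_trailing (P : Polynomial ℝ) (f : ℕ → ℝ) (hf0 : f 0 = 1) :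
    pmul P f P.natTrailingDegree = P.coeff P.natTrailingDegree := by
  unfold pmul
  rw [Finset.sum_range_succ, Nat.sub_self, hf0, mul_one]
  rw [Finset.sum_eq_zero, zero_add]
  intro k hk
  rw [Finset.mem_range] at hk
  rw [Polynomial.coeff_eq_zero_of_lt_natTrailingDegree hk, zero_mul]

lemma pmul_zero (f : ℕ → ℝ) : pmul 0 f = fun _ => 0 := by
  funext n; simp [pmul]

noncomputable def FF {m : ℕ} (ab : Fin m → ℝ × ℝ) (P : Fin m → Polynomial ℝ) : ℕ → ℝ :=
  fun n => ∑ i, pmul (P i) (hc (ab i).1 (ab i).2) n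

def Nf : ℕ → ℕ → ℕ
  | 0, _ => 0
  | m + 1, D => Nf m (2 * D + 1) + D + 1

lemma Nf_mono_D (m : ℕ) : Monotone (Nf m) := by
  induction m with
  | zero => intro x y _; simp [Nf]
  | succ m ih =>
    intro x y hxy
    simp only [Nf]
    have := ih (by omega : 2 * x + 1 ≤ 2 * y + 1)
    omega

lemma Nf_mono_m {m m' : ℕ} (h : m ≤ m') (D : ℕ) : Nf m D ≤ Nf m' D := by
  have : Monotone (fun m => Nf m D) := by
    apply monotone_nat_of_le_succ
    intro n
    have h3 : Nf n D ≤ Nf n (2 * D + 1) := Nf_mono_D n (by omega)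
    simp only [Nf]
    omega
  exact this h

lemma phi_FF {m : ℕ} (c e : ℝ) (ab : Fin m → ℝ × ℝ) (P : Fin m → Polynomial ℝ) :
    phi c e (FF ab P) = FF ab (fun i => opP (ab i).1 (ab i).2 c e (P i)) := by
  unfold FF
  rw [phi_sum]
  funext n
  exact Finset.sum_congr rfl fun i _ => by rw [phi_pmul]

lemma phi_iter_FF {m : ℕ} (c e : ℝ) (s : ℕ) (ab : Fin m → ℝ × ℝ) (P : Fin m → Polynomial ℝ) :
    (phi c e)^[s] (FF ab P) = FF ab (fun i => (opP (ab i).1 (ab i).2 c e)^[s] (P i)) := by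
  induction s generalizing P with
  | zero => simp
  | succ t ih =>
    rw [Function.iterate_succ_apply, phi_FF, ih]
    congr 1

lemma opP_iter_ne_zero (a b c e : ℝ) (s : ℕ) (P : Polynomial ℝ) (hP : P ≠ 0)
    (hne : (a, b) ≠ (c, e)) : (opP a b c e)^[s] P ≠ 0 := by
  induction s generalizing P with
  | zero => simpa using hP
  | succ t ih =>
    rw [Function.iterate_succ_apply]
    exact ih _ (opP_ne_zero a b c e P hP hne)

lemma opP_iter_natDegree (a b c e : ℝ) (s : ℕ) (P : Polynomial ℝ) :
    ((opP a b c e)^[s] P).natDegree ≤ P.natDegree + s := by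
  induction s generalizing P with
  | zero => simp
  | succ t ih =>
    rw [Function.iterate_succ_apply]
    exact le_trans (ih _) (by have := opP_natDegree a b c e P; omega)

lemma main_ind : ∀ (m D : ℕ) (ab : Fin (m + 1) → ℝ × ℝ) (P : Fin (m + 1) → Polynomial ℝ),
    Function.Injective ab → (∀ i, P i ≠ 0) → (∀ i, (P i).natDegree ≤ D) →
    ∃ n ≤ Nf (m + 1) D, FF ab P n ≠ 0 := by
  intro m
  induction m with
  | zero =>
    intro D ab P hinj hP hD
    refine ⟨(P 0).natTrailingDegree, ?_, ?_⟩
    · have h1 : (P 0).natTrailingDegree ≤ (P 0).natDegree :=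
        Polynomial.natTrailingDegree_le_natDegree (P 0)
      have h2 := hD 0
      show (P 0).natTrailingDegree ≤ Nf 0 (2 * D + 1) + D + 1
      simp only [Nf]
      omega
    · have h3 : FF ab P (P 0).natTrailingDegree
          = pmul (P 0) (hc (ab 0).1 (ab 0).2) (P 0).natTrailingDegree := by
        unfold FF
        rw [Fin.sum_univ_one]
      rw [h3, pmul_trailing _ _ (hc_zero _ _)]
      rw [← Polynomial.trailingCoeff]
      exact Polynomial.trailingCoeff_nonzero_iff_nonzero.mpr (hP 0)
  | succ m ih =>
    intro D ab P hinj hP hD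
    set lst := Fin.last (m + 1) with hlst
    set c := (ab lst).1 with hc1
    set e := (ab lst).2 with he1
    set s := (P lst).natDegree + 1 with hs
    set ab' : Fin (m + 1) → ℝ × ℝ := fun i => ab i.castSucc with hab'
    set P' : Fin (m + 1) → Polynomial ℝ :=
      fun i => (opP (ab' i).1 (ab' i).2 c e)^[s] (P i.castSucc) with hP'def
    have hinj' : Function.Injective ab' := by
      intro i j h
      exact Fin.castSucc_injective _ (hinj h)
    have hne : ∀ i : Fin (m + 1), ((ab' i).1, (ab' i).2) ≠ (c, e) := by
      intro i h
      have h2 : ab' i = ab lst := by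
        rw [show ab lst = ((ab lst).1, (ab lst).2) from rfl, ← hc1, ← he1, ← h]
      have h3 : i.castSucc = lst := hinj h2
      exact absurd (congrArg Fin.val h3) (by simp [hlst]; omega)
    have hP'ne : ∀ i, P' i ≠ 0 := fun i =>
      opP_iter_ne_zero _ _ _ _ _ _ (hP i.castSucc) (hne i)
    have hD' : ∀ i, (P' i).natDegree ≤ 2 * D + 1 := by
      intro i
      apply le_trans (opP_iter_natDegree _ _ _ _ _ _)
      have h4 := hD i.castSucc
      have h5 := hD lst
      omega
    obtain ⟨n, hn, hFF'⟩ := ih (2 * D + 1) ab' P' hinj' hP'ne hD'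
    by_contra hcon
    push_neg at hcon
    have hbound : n + s ≤ Nf (m + 1 + 1) D := by
      show n + s ≤ Nf (m + 1) (2 * D + 1) + D + 1
      have h5 := hD lst
      omega
    have hvan : ∀ j ≤ n + s, FF ab P j = 0 := fun j hj => hcon j (le_trans hj hbound)
    have hvan2 : ∀ j ≤ n, (phi c e)^[s] (FF ab P) j = 0 :=
      phi_iter_vanish c e s _ n hvan
    have hiter : (phi c e)^[s] (FF ab P)
        = FF ab (fun i => (opP (ab i).1 (ab i).2 c e)^[s] (P i)) :=
      phi_iter_FF c e s ab P
    have hdeq : opP c e c e = ⇑(Polynomial.derivative (R := ℝ)) := funext (opP_self c e)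
    have hlast : (opP (ab (Fin.last (m + 1))).1 (ab (Fin.last (m + 1))).2 c e)^[s]
        (P (Fin.last (m + 1))) = 0 := by
      show (opP c e c e)^[s] (P lst) = 0
      rw [hdeq]
      exact Polynomial.iterate_derivative_eq_zero (by omega)
    have hred : FF ab (fun i => (opP (ab i).1 (ab i).2 c e)^[s] (P i)) n = FF ab' P' n := by
      unfold FF
      rw [Fin.sum_univ_castSucc]
      simp only [hlast, pmul_zero, hP'def, hab']
      simp
    exact hFF' (by rw [← hred, ← hiter]; exact hvan2 n le_rfl)

lemma pmul_C (l : ℝ) (f : ℕ → ℝ) (n : ℕ) : pmul (Polynomial.C l) f n = l * f n := by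
  unfold pmul
  rw [Finset.sum_eq_single 0]
  · simp
  · intro k hk hk0
    simp [Polynomial.coeff_C, hk0]
  · intro h
    simp at h

lemma main_ind' (m D : ℕ) (hm : m ≠ 0) (ab : Fin m → ℝ × ℝ) (P : Fin m → Polynomial ℝ)
    (hinj : Function.Injective ab) (hP : ∀ i, P i ≠ 0) (hD : ∀ i, (P i).natDegree ≤ D) :
    ∃ n ≤ Nf m D, FF ab P n ≠ 0 := by
  obtain ⟨m', rfl⟩ : ∃ m'', m = m'' + 1 := ⟨m - 1, by omega⟩
  exact main_ind m' D ab P hinj hP hD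

/-- The sum appearing in `hasNontrivialSol` rewritten via `hc`. -/
lemma sol_sum_eq (k' : ℕ) (a b c : Fin k' → ℝ) (n : ℕ) :
    (∑ j, ∑ nn ∈ (Finset.range (n + 1) ×ˢ Finset.range (n + 1)).filter
        (fun nn : ℕ × ℕ => nn.1 + 2 * nn.2 = n),
      c j ^ 2 * a j ^ nn.1 * b j ^ nn.2 / (nn.1.factorial * nn.2.factorial : ℝ))
    = ∑ j, c j ^ 2 * hc (a j) (b j) n := by
  apply Finset.sum_congr rfl
  intro j _
  rw [hc, Finset.mul_sum]
  apply Finset.sum_congr rfl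
  intro nn _
  ring

theorem exists_not_sol (k' : ℕ) : ∃ r, 1 ≤ r ∧ ¬ hasNontrivialSol k' r := by
  classical
  refine ⟨max 1 (Nf (k' + 1) 0), le_max_left _ _, ?_⟩
  rintro ⟨a, b, c, hcne, ⟨j0, hj0⟩, heq⟩
  set r := max 1 (Nf (k' + 1) 0) with hr
  set pr : Fin k' → ℝ × ℝ := fun j => (a j, b j) with hpr
  set T : Finset (ℝ × ℝ) := insert (0, 0) (Finset.image pr Finset.univ) with hT
  set S : ℝ := ∑ j, c j ^ 2 with hS
  set lam : ℝ × ℝ → ℝ := fun g =>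
    (∑ j ∈ Finset.univ.filter (fun j => pr j = g), c j ^ 2)
      - (if g = (0, 0) then S else 0) with hlam
  have hcsq : ∀ j : Fin k', 0 < c j ^ 2 := fun j =>
    lt_of_le_of_ne (sq_nonneg _) (Ne.symm (pow_ne_zero 2 (hcne j)))
  have hlam_ne : ∀ g ∈ T, lam g ≠ 0 := by
    intro g hg
    by_cases hg0 : g = (0, 0)
    · subst hg0
      have hj0mem : j0 ∉ Finset.univ.filter (fun j => pr j = ((0 : ℝ), (0 : ℝ))) := by
        simp only [Finset.mem_filter, Finset.mem_univ, true_and, hpr]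
        intro hfalse
        exact hj0 (by simpa using congrArg Prod.fst hfalse)
      have hlt : (∑ j ∈ Finset.univ.filter (fun j => pr j = ((0 : ℝ), (0 : ℝ))), c j ^ 2) < S := by
        rw [hS]
        apply Finset.sum_lt_sum_of_subset (Finset.filter_subset _ _) (Finset.mem_univ j0) hj0mem
          (hcsq j0)
        intro j _ _
        exact le_of_lt (hcsq j)
      simp only [hlam, if_pos rfl]
      intro h0
      rw [sub_eq_zero] at h0
      exact absurd h0 (ne_of_lt hlt)
    · have hgim : g ∈ Finset.image pr Finset.univ := by
        rcases Finset.mem_insert.mp hg with h | h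
        · exact absurd h hg0
        · exact h
      obtain ⟨j1, _, hj1⟩ := Finset.mem_image.mp hgim
      have hpos : 0 < ∑ j ∈ Finset.univ.filter (fun j => pr j = g), c j ^ 2 := by
        apply Finset.sum_pos
        · intro j _; exact hcsq j
        · exact ⟨j1, by simp [hj1]⟩
      simp only [hlam, if_neg hg0, sub_zero]
      exact ne_of_gt hpos
  have hGF : ∀ n, (∑ g ∈ T, lam g * hc g.1 g.2 n)
      = (∑ j, c j ^ 2 * hc (a j) (b j) n) - S * hc 0 0 n := by
    intro n
    have h1 : (∑ g ∈ T, lam g * hc g.1 g.2 n)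
        = (∑ g ∈ T, (∑ j ∈ Finset.univ.filter (fun j => pr j = g), c j ^ 2) * hc g.1 g.2 n)
          - (∑ g ∈ T, (if g = (0, 0) then S * hc g.1 g.2 n else 0)) := by
      rw [← Finset.sum_sub_distrib]
      apply Finset.sum_congr rfl
      intro g _
      simp only [hlam]
      by_cases hg0 : g = (0, 0)
      · rw [if_pos hg0, if_pos hg0]
        ring
      · rw [if_neg hg0, if_neg hg0]
        ring
    rw [h1]
    congr 1
    · rw [← Finset.sum_subset (Finset.subset_insert _ _ : Finset.image pr Finset.univ ⊆ T)]
      · rw [← Finset.sum_fiberwise_of_maps_to (g := pr)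
          (fun j _ => Finset.mem_image_of_mem pr (Finset.mem_univ j))
          (fun j => c j ^ 2 * hc (a j) (b j) n)]
        apply Finset.sum_congr rfl
        intro g _
        rw [Finset.sum_mul]
        apply Finset.sum_congr rfl
        intro j hj
        have : pr j = g := (Finset.mem_filter.mp hj).2
        rw [← this]
      · intro g _ hgnot
        have : Finset.univ.filter (fun j => pr j = g) = ∅ := by
          apply Finset.filter_eq_empty_iff.mpr
          intro j _
          intro hfalse
          exact hgnot (by rw [← hfalse]; exact Finset.mem_image_of_mem pr (Finset.mem_univ j))
        rw [this]
        simp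
    · rw [Finset.sum_ite_eq' T ((0 : ℝ), (0 : ℝ)) (fun g => S * hc g.1 g.2 n)]
      rw [if_pos (Finset.mem_insert_self _ _)]
  have hvanish : ∀ n ≤ r, (∑ g ∈ T, lam g * hc g.1 g.2 n) = 0 := by
    intro n hn
    rcases Nat.eq_zero_or_pos n with h0 | h0
    · subst h0
      rw [hGF, hc_zero]
      have : ∀ j : Fin k', c j ^ 2 * hc (a j) (b j) 0 = c j ^ 2 := by
        intro j; rw [hc_zero, mul_one]
      rw [Finset.sum_congr rfl (fun j _ => this j)]
      simp [hS]
    · rw [hGF, hc_zero_zero n (by omega), mul_zero, sub_zero]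
      rw [← sol_sum_eq k' a b c n]
      exact heq n (Finset.mem_Icc.mpr ⟨h0, hn⟩)
  -- apply the main induction to the reindexed family
  have hTne : T.Nonempty := ⟨(0, 0), Finset.mem_insert_self _ _⟩
  have hTcard : T.card ≠ 0 := Finset.card_ne_zero.mpr hTne
  set eT := T.equivFin with heT
  set ab : Fin T.card → ℝ × ℝ := fun i => (eT.symm i : ℝ × ℝ) with hab
  set P : Fin T.card → Polynomial ℝ := fun i => Polynomial.C (lam (ab i)) with hPdef
  have habinj : Function.Injective ab := by
    intro i j hij
    have := Subtype.coe_injective (a₁ := eT.symm i) (a₂ := eT.symm j) hij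
    exact eT.symm.injective this
  have habmem : ∀ i, ab i ∈ T := fun i => (eT.symm i).2
  have hPne : ∀ i, P i ≠ 0 := by
    intro i
    simp only [hPdef, ne_eq, Polynomial.C_eq_zero]
    exact hlam_ne _ (habmem i)
  have hPD : ∀ i, (P i).natDegree ≤ 0 := by
    intro i
    simp [hPdef]
  obtain ⟨n0, hn0, hFFn0⟩ := main_ind' T.card 0 hTcard ab P habinj hPne hPD
  have hcard_le : T.card ≤ k' + 1 := by
    apply le_trans (Finset.card_insert_le _ _)
    have := Finset.card_image_le (f := pr) (s := Finset.univ)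
    simp only [Finset.card_univ, Fintype.card_fin] at this
    omega
  have hn0r : n0 ≤ r := by
    have h1 : Nf T.card 0 ≤ Nf (k' + 1) 0 := Nf_mono_m hcard_le 0
    have h2 : Nf (k' + 1) 0 ≤ r := le_max_right _ _
    omega
  have hFFval : FF ab P n0 = ∑ g ∈ T, lam g * hc g.1 g.2 n0 := by
    unfold FF
    have h3 : ∀ i : Fin T.card, pmul (P i) (hc (ab i).1 (ab i).2) n0
        = lam (ab i) * hc (ab i).1 (ab i).2 n0 := by
      intro i
      rw [hPdef]
      exact pmul_C _ _ _
    rw [Finset.sum_congr rfl (fun i _ => h3 i)]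
    rw [← Finset.sum_coe_sort T (fun g => lam g * hc g.1 g.2 n0)]
    exact Equiv.sum_comp eT.symm (fun x => lam (x : ℝ × ℝ) * hc (x : ℝ × ℝ).1 (x : ℝ × ℝ).2 n0)
  exact hFFn0 (by rw [hFFval]; exact hvanish n0 hn0r)

/-- `rbar` facts -/
lemma rbar_mem (k' : ℕ) : 1 ≤ rbar k' ∧ ¬ hasNontrivialSol k' (rbar k') := by
  have h := exists_not_sol k'
  have : {r : ℕ | 1 ≤ r ∧ ¬hasNontrivialSol k' r}.Nonempty := by
    obtain ⟨r, h1, h2⟩ := h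
    exact ⟨r, h1, h2⟩
  exact Nat.sInf_mem this

lemma rbar_pos (k' : ℕ) : 1 ≤ rbar k' := (rbar_mem k').1

lemma sol_mono (k1 k2 r : ℕ) (hk : k1 ≤ k2) (h : hasNontrivialSol k1 r) :
    hasNontrivialSol k2 r := by
  classical
  obtain ⟨a, b, c, hcne, ⟨j0, hj0⟩, heq⟩ := h
  refine ⟨fun j => if h : (j : ℕ) < k1 then a ⟨j, h⟩ else 0,
    fun j => if h : (j : ℕ) < k1 then b ⟨j, h⟩ else 0,
    fun j => if h : (j : ℕ) < k1 then c ⟨j, h⟩ else 1, ?_, ?_, ?_⟩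
  · intro j
    by_cases h : (j : ℕ) < k1 <;> simp [h]
    · exact hcne _
  · refine ⟨⟨j0, by omega⟩, ?_⟩
    have : ((⟨(j0 : ℕ), by omega⟩ : Fin k2) : ℕ) < k1 := by simp
    simp only [this, dif_pos]
    exact hj0
  · intro α hα
    have hα1 : 1 ≤ α := (Finset.mem_Icc.mp hα).1
    beta_reduce
    refine Eq.trans ?_ (heq α hα)
    set F : ℕ → ℝ := fun m =>
      if h : m < k1 then
        ∑ nn ∈ (Finset.range (α + 1) ×ˢ Finset.range (α + 1)).filter
            (fun nn : ℕ × ℕ => nn.1 + 2 * nn.2 = α),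
          c ⟨m, h⟩ ^ 2 * a ⟨m, h⟩ ^ nn.1 * b ⟨m, h⟩ ^ nn.2 /
            (nn.1.factorial * nn.2.factorial : ℝ)
      else 0 with hF
    have h1 : ∀ j : Fin k2,
        (∑ nn ∈ (Finset.range (α + 1) ×ˢ Finset.range (α + 1)).filter
            (fun nn : ℕ × ℕ => nn.1 + 2 * nn.2 = α),
          (if h : (j : ℕ) < k1 then c ⟨j, h⟩ else 1) ^ 2
            * (if h : (j : ℕ) < k1 then a ⟨j, h⟩ else 0) ^ nn.1
            * (if h : (j : ℕ) < k1 then b ⟨j, h⟩ else 0) ^ nn.2 /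
            (nn.1.factorial * nn.2.factorial : ℝ)) = F (j : ℕ) := by
      intro j
      by_cases h : (j : ℕ) < k1
      · simp only [hF, dif_pos h]
      · simp only [hF, dif_neg h]
        apply Finset.sum_eq_zero
        intro nn hnn
        rw [Finset.mem_filter] at hnn
        rcases Nat.eq_zero_or_pos nn.1 with h2 | h2
        · have h3 : nn.2 ≠ 0 := by omega
          simp [zero_pow h3, h2]
        · simp [zero_pow (by omega : nn.1 ≠ 0)]
    rw [Finset.sum_congr rfl (fun j _ => h1 j)]
    rw [Fin.sum_univ_eq_sum_range F k2]
    rw [← Finset.sum_subset (Finset.range_subset_range.mpr hk)]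
    · rw [← Fin.sum_univ_eq_sum_range F k1]
      apply Finset.sum_congr rfl
      intro j _
      simp only [hF, dif_pos j.isLt]
    · intro m _ hm
      simp only [hF]
      rw [dif_neg (by simpa using hm)]

lemma rbar_mono {k1 k2 : ℕ} (h : k1 ≤ k2) : rbar k1 ≤ rbar k2 := by
  have hmem := rbar_mem k2
  apply Nat.sInf_le
  exact ⟨hmem.1, fun hsol => hmem.2 (sol_mono k1 k2 _ h hsol)⟩

/-! ### Geometry of the ground metric -/

noncomputable def toE {d : ℕ} (v : Fin d → ℝ) : EuclideanSpace ℝ (Fin d) :=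
  (WithLp.equiv 2 (Fin d → ℝ)).symm v

noncomputable def toEM {d : ℕ} (M : Matrix (Fin d) (Fin d) ℝ) :
    EuclideanSpace ℝ (Fin d × Fin d) :=
  (WithLp.equiv 2 (Fin d × Fin d → ℝ)).symm (fun p => M p.1 p.2)

lemma vecNorm_eq {d : ℕ} (v : Fin d → ℝ) : vecNorm v = ‖toE v‖ := by
  rw [EuclideanSpace.norm_eq, vecNorm]
  congr 1
  apply Finset.sum_congr rfl
  intro i _
  rw [Real.norm_eq_abs, sq_abs]
  rfl

lemma matNorm_eq {d : ℕ} (M : Matrix (Fin d) (Fin d) ℝ) : matNorm M = ‖toEM M‖ := by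
  rw [EuclideanSpace.norm_eq, matNorm]
  congr 1
  rw [Fintype.sum_prod_type]
  apply Finset.sum_congr rfl
  intro i _
  apply Finset.sum_congr rfl
  intro j _
  rw [Real.norm_eq_abs, sq_abs]
  rfl

lemma toE_sub {d : ℕ} (x y : Fin d → ℝ) : toE (x - y) = toE x - toE y := rfl

lemma toEM_sub {d : ℕ} (M N : Matrix (Fin d) (Fin d) ℝ) : toEM (M - N) = toEM M - toEM N := rfl

lemma vecNorm_nonneg {d : ℕ} (v : Fin d → ℝ) : 0 ≤ vecNorm v := Real.sqrt_nonneg _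

lemma matNorm_nonneg {d : ℕ} (M : Matrix (Fin d) (Fin d) ℝ) : 0 ≤ matNorm M := Real.sqrt_nonneg _

lemma vecNorm_triangle {d : ℕ} (x y z : Fin d → ℝ) :
    vecNorm (x - z) ≤ vecNorm (x - y) + vecNorm (y - z) := by
  rw [vecNorm_eq, vecNorm_eq, vecNorm_eq, toE_sub, toE_sub, toE_sub]
  have h := norm_add_le (toE x - toE y) (toE y - toE z)
  rwa [sub_add_sub_cancel] at h

lemma matNorm_triangle {d : ℕ} (x y z : Matrix (Fin d) (Fin d) ℝ) :
    matNorm (x - z) ≤ matNorm (x - y) + matNorm (y - z) := by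
  rw [matNorm_eq, matNorm_eq, matNorm_eq, toEM_sub, toEM_sub, toEM_sub]
  have h := norm_add_le (toEM x - toEM y) (toEM y - toEM z)
  rwa [sub_add_sub_cancel] at h

lemma vecNorm_eq_zero {d : ℕ} {v : Fin d → ℝ} (h : vecNorm v = 0) : v = 0 := by
  rw [vecNorm_eq, norm_eq_zero] at h
  have := congrArg (WithLp.equiv 2 (Fin d → ℝ)) h
  simpa [toE] using this

lemma matNorm_eq_zero {d : ℕ} {M : Matrix (Fin d) (Fin d) ℝ} (h : matNorm M = 0) : M = 0 := by
  rw [matNorm_eq, norm_eq_zero] at h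
  have h2 := congrArg (WithLp.equiv 2 (Fin d × Fin d → ℝ)) h
  simp only [toEM, Equiv.apply_symm_apply] at h2
  ext i j
  exact congrFun h2 (i, j)

lemma gDist_nonneg {d : ℕ} (θ θ' : GaussParam d) : 0 ≤ gDist θ θ' :=
  add_nonneg (vecNorm_nonneg _) (matNorm_nonneg _)

lemma gDist_triangle {d : ℕ} (θ₁ θ₂ θ₃ : GaussParam d) :
    gDist θ₁ θ₃ ≤ gDist θ₁ θ₂ + gDist θ₂ θ₃ := by
  unfold gDist
  have h1 := vecNorm_triangle θ₁.1 θ₂.1 θ₃.1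
  have h2 := matNorm_triangle θ₁.2 θ₂.2 θ₃.2
  linarith

lemma gDist_eq_zero {d : ℕ} {θ θ' : GaussParam d} (h : gDist θ θ' = 0) : θ = θ' := by
  unfold gDist at h
  have h1 : vecNorm (θ.1 - θ'.1) = 0 := by
    have := vecNorm_nonneg (θ.1 - θ'.1)
    have := matNorm_nonneg (θ.2 - θ'.2)
    linarith
  have h2 : matNorm (θ.2 - θ'.2) = 0 := by
    have := vecNorm_nonneg (θ.1 - θ'.1)
    have := matNorm_nonneg (θ.2 - θ'.2)
    linarith
  have e1 : θ.1 = θ'.1 := by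
    have := vecNorm_eq_zero h1
    exact sub_eq_zero.mp this
  have e2 : θ.2 = θ'.2 := by
    have := matNorm_eq_zero h2
    exact sub_eq_zero.mp this
  exact Prod.ext e1 e2

/-- Expansion of the quadratic form at `e_i + s e_j`. -/
lemma quad_expand {d : ℕ} (M : Matrix (Fin d) (Fin d) ℝ) (i j : Fin d) (s : ℝ) :
    dotProduct (fun k => (if i = k then (1:ℝ) else 0) + s * (if j = k then 1 else 0))
      (M.mulVec (fun k => (if i = k then (1:ℝ) else 0) + s * (if j = k then 1 else 0)))
      = M i i + s * M i j + s * M j i + s ^ 2 * M j j := by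
  have hin : ∀ k, M.mulVec (fun k => (if i = k then (1:ℝ) else 0) + s * (if j = k then 1 else 0)) k
      = M k i + s * M k j := by
    intro k
    show (∑ l, M k l * ((if i = l then (1:ℝ) else 0) + s * (if j = l then 1 else 0))) = _
    have : ∀ l, M k l * ((if i = l then (1:ℝ) else 0) + s * (if j = l then 1 else 0))
        = M k l * (if i = l then (1:ℝ) else 0) + s * (M k l * (if j = l then 1 else 0)) := by
      intro l; ring
    rw [Finset.sum_congr rfl (fun l _ => this l), Finset.sum_add_distrib,
      Finset.sum_mul_boole, ← Finset.mul_sum, Finset.sum_mul_boole]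
    simp
  show (∑ k, ((if i = k then (1:ℝ) else 0) + s * (if j = k then 1 else 0))
      * M.mulVec (fun k => (if i = k then (1:ℝ) else 0) + s * (if j = k then 1 else 0)) k) = _
  rw [Finset.sum_congr rfl (fun k _ => by rw [hin k])]
  have : ∀ k, ((if i = k then (1:ℝ) else 0) + s * (if j = k then 1 else 0)) * (M k i + s * M k j)
      = (if i = k then (1:ℝ) else 0) * (M k i + s * M k j)
        + s * ((if j = k then (1:ℝ) else 0) * (M k i + s * M k j)) := by
    intro k; ring
  rw [Finset.sum_congr rfl (fun k _ => this k), Finset.sum_add_distrib,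
    Finset.sum_boole_mul, ← Finset.mul_sum, Finset.sum_boole_mul]
  simp
  ring

lemma dot_expand {d : ℕ} (i j : Fin d) (hij : i ≠ j) (s : ℝ) :
    dotProduct (fun k => (if i = k then (1:ℝ) else 0) + s * (if j = k then 1 else 0))
      (fun k => (if i = k then (1:ℝ) else 0) + s * (if j = k then 1 else 0))
      = 1 + s ^ 2 := by
  show (∑ k, ((if i = k then (1:ℝ) else 0) + s * (if j = k then 1 else 0))
      * ((if i = k then (1:ℝ) else 0) + s * (if j = k then 1 else 0))) = _
  have : ∀ k, ((if i = k then (1:ℝ) else 0) + s * (if j = k then 1 else 0))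
      * ((if i = k then (1:ℝ) else 0) + s * (if j = k then 1 else 0))
      = (if i = k then (1:ℝ) else 0) * ((if i = k then (1:ℝ) else 0) + s * (if j = k then 1 else 0))
        + s * ((if j = k then (1:ℝ) else 0)
          * ((if i = k then (1:ℝ) else 0) + s * (if j = k then 1 else 0))) := by
    intro k; ring
  rw [Finset.sum_congr rfl (fun k _ => this k), Finset.sum_add_distrib,
    Finset.sum_boole_mul, ← Finset.mul_sum, Finset.sum_boole_mul]
  simp [if_pos rfl, if_neg hij, if_neg (Ne.symm hij)]
  ring

/-- All entries of matrices in a good scale set are bounded by `hi`. -/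
lemma entry_bound {d : ℕ} {Ω : Set (Matrix (Fin d) (Fin d) ℝ)} {lo hi : ℝ}
    (hlo : 0 < lo) (hlohi : lo ≤ hi)
    (hprop : ∀ M ∈ Ω, M.IsSymm ∧ ∀ v : Fin d → ℝ,
      lo * dotProduct v v ≤ dotProduct v (M.mulVec v) ∧
      dotProduct v (M.mulVec v) ≤ hi * dotProduct v v) :
    ∀ M ∈ Ω, ∀ i j, |M i j| ≤ hi := by
  intro M hM i j
  obtain ⟨hsym, hquad⟩ := hprop M hM
  have hdiag : ∀ l, lo ≤ M l l ∧ M l l ≤ hi := by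
    intro l
    have hdot : dotProduct
        (fun k => (if l = k then (1:ℝ) else 0) + 0 * (if l = k then 1 else 0))
        (fun k => (if l = k then (1:ℝ) else 0) + 0 * (if l = k then 1 else 0)) = 1 := by
      simp [dotProduct]
    have h1 := hquad (fun k => (if l = k then (1:ℝ) else 0) + 0 * (if l = k then 1 else 0))
    rw [quad_expand, hdot] at h1
    obtain ⟨h2, h3⟩ := h1
    constructor <;> nlinarith [h2, h3]
  by_cases hij : i = j
  · subst hij
    have := hdiag i
    rw [abs_le]
    constructor <;> nlinarith [this.1, this.2]
  · have hs : M j i = M i j := hsym.apply i j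
    have hp := hquad (fun k => (if i = k then (1:ℝ) else 0) + 1 * (if j = k then 1 else 0))
    have hm := hquad (fun k => (if i = k then (1:ℝ) else 0) + (-1) * (if j = k then 1 else 0))
    rw [quad_expand, dot_expand i j hij] at hp hm
    obtain ⟨hp1, hp2⟩ := hp
    obtain ⟨hm1, hm2⟩ := hm
    have hdi := hdiag i
    have hdj := hdiag j
    rw [abs_le]
    norm_num at hp1 hp2 hm1 hm2
    rw [hs] at hp1 hm1
    constructor <;> nlinarith [hp1, hm1, hdi.1, hdi.2, hdj.1, hdj.2]

lemma vecNorm_le_of_bound {d : ℕ} {v : Fin d → ℝ} {C : ℝ} (hC : 0 ≤ C) (h : ∀ i, |v i| ≤ C) :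
    vecNorm v ≤ C * Real.sqrt d := by
  rw [vecNorm]
  have h1 : (∑ i, v i ^ 2) ≤ ∑ _i : Fin d, C ^ 2 := by
    apply Finset.sum_le_sum
    intro i _
    have := h i
    nlinarith [abs_nonneg (v i), sq_abs (v i)]
  have h2 : (∑ _i : Fin d, C ^ 2) = (d : ℝ) * C ^ 2 := by
    rw [Finset.sum_const, Finset.card_univ, Fintype.card_fin, nsmul_eq_mul]
  have h3 : Real.sqrt (∑ i, v i ^ 2) ≤ Real.sqrt ((d : ℝ) * C ^ 2) := by
    apply Real.sqrt_le_sqrt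
    rw [← h2]; exact h1
  apply le_trans h3
  rw [show (d : ℝ) * C ^ 2 = (C * Real.sqrt d) ^ 2 by
    rw [mul_pow, Real.sq_sqrt (by positivity : (0:ℝ) ≤ (d:ℝ))]; ring]
  rw [Real.sqrt_sq (by positivity)]

lemma matNorm_le_of_bound {d : ℕ} {M : Matrix (Fin d) (Fin d) ℝ} {C : ℝ} (hC : 0 ≤ C)
    (h : ∀ i j, |M i j| ≤ C) : matNorm M ≤ C * d := by
  rw [matNorm]
  have h1 : (∑ i, ∑ j, M i j ^ 2) ≤ ∑ _i : Fin d, ∑ _j : Fin d, C ^ 2 := by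
    apply Finset.sum_le_sum
    intro i _
    apply Finset.sum_le_sum
    intro j _
    have := h i j
    nlinarith [abs_nonneg (M i j), sq_abs (M i j)]
  have h2 : (∑ _i : Fin d, ∑ _j : Fin d, C ^ 2) = (d : ℝ) * ((d : ℝ) * C ^ 2) := by
    simp [Finset.sum_const, Finset.card_univ, nsmul_eq_mul]
  have h3 : Real.sqrt (∑ i, ∑ j, M i j ^ 2) ≤ Real.sqrt ((d : ℝ) * ((d : ℝ) * C ^ 2)) := by
    apply Real.sqrt_le_sqrt
    rw [← h2]; exact h1
  apply le_trans h3
  rw [show (d : ℝ) * ((d : ℝ) * C ^ 2) = (C * d) ^ 2 by ring]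
  rw [Real.sqrt_sq (by positivity)]

/-! ### Wasserstein upper bound via an assignment coupling -/

lemma wassersteinPow_bddBelow {E : Type*} (Dst : E → E → ℝ) (r : ℕ) (G G0 : MixingMeasure E)
    (hDnn : ∀ i j, 0 ≤ Dst (G.atom i) (G0.atom j)) :
    BddBelow {c | ∃ q ∈ couplings G G0,
      c = ∑ i, ∑ j, q i j * Dst (G.atom i) (G0.atom j) ^ r} := by
  refine ⟨0, ?_⟩
  rintro x ⟨q, ⟨hq0, _, _⟩, rfl⟩
  apply Finset.sum_nonneg
  intro i _
  apply Finset.sum_nonneg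
  intro j _
  exact mul_nonneg (hq0 i j) (pow_nonneg (hDnn i j) r)

lemma wassersteinPow_nonneg {E : Type*} (Dst : E → E → ℝ) (r : ℕ) (G G0 : MixingMeasure E)
    (hDnn : ∀ i j, 0 ≤ Dst (G.atom i) (G0.atom j)) :
    0 ≤ wassersteinPow Dst r G G0 := by
  apply le_csInf
  · refine ⟨∑ i, ∑ j, (G.p i * G0.p j) * Dst (G.atom i) (G0.atom j) ^ r,
      fun i j => G.p i * G0.p j, ⟨?_, ?_, ?_⟩, rfl⟩
    · intro i j
      exact mul_nonneg (le_of_lt (G.p_pos i)) (le_of_lt (G0.p_pos j))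
    · intro i
      rw [← Finset.mul_sum, G0.p_sum, mul_one]
    · intro j
      rw [← Finset.sum_mul, G.p_sum, one_mul]
  · rintro x ⟨q, ⟨hq0, _, _⟩, rfl⟩
    apply Finset.sum_nonneg
    intro i _
    apply Finset.sum_nonneg
    intro j _
    exact mul_nonneg (hq0 i j) (pow_nonneg (hDnn i j) r)

lemma wass_le_assignment {E : Type*} (Dst : E → E → ℝ) (r : ℕ) (G G0 : MixingMeasure E)
    (σ : Fin G.order → Fin G0.order) (Dmax : ℝ)
    (hDnn : ∀ i j, 0 ≤ Dst (G.atom i) (G0.atom j))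
    (hDb : ∀ i j, Dst (G.atom i) (G0.atom j) ≤ Dmax) :
    wassersteinPow Dst r G G0 ≤
      (∑ i, G.p i * Dst (G.atom i) (G0.atom (σ i)) ^ r)
      + Dmax ^ r * ∑ j, |(∑ i ∈ Finset.univ.filter (fun i => σ i = j), G.p i) - G0.p j| := by
  classical
  set ρ : Fin G0.order → ℝ := fun j => ∑ i ∈ Finset.univ.filter (fun i => σ i = j), G.p i
    with hρ
  set mm : Fin G0.order → ℝ := fun j => min (ρ j) (G0.p j) with hmm
  set T : ℝ := ∑ j, (ρ j - mm j) with hT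
  set T' : ℝ := if T = 0 then 1 else T with hT'
  have hρnn : ∀ j, 0 ≤ ρ j := fun j =>
    Finset.sum_nonneg fun i _ => le_of_lt (G.p_pos i)
  have hρpos : ∀ i, 0 < ρ (σ i) := by
    intro i
    apply Finset.sum_pos (fun i' _ => G.p_pos i')
    exact ⟨i, Finset.mem_filter.mpr ⟨Finset.mem_univ i, rfl⟩⟩
  have hmmnn : ∀ j, 0 ≤ mm j := fun j => le_min (hρnn j) (le_of_lt (G0.p_pos j))
  have hmmρ : ∀ j, mm j ≤ ρ j := fun j => min_le_left _ _
  have hmmp0 : ∀ j, mm j ≤ G0.p j := fun j => min_le_right _ _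
  have hTnn : 0 ≤ T := Finset.sum_nonneg fun j _ => by linarith [hmmρ j]
  have hT'pos : 0 < T' := by
    rw [hT']
    by_cases h : T = 0
    · simp [h]
    · simp only [if_neg h]
      exact lt_of_le_of_ne hTnn (Ne.symm h)
  have hsumρ : ∑ j, ρ j = 1 := by
    rw [hρ, Finset.sum_fiberwise_of_maps_to (fun i _ => Finset.mem_univ (σ i)) G.p]
    exact G.p_sum
  have hsumδ : ∑ j, (G0.p j - mm j) = T := by
    rw [hT, Finset.sum_sub_distrib, Finset.sum_sub_distrib, hsumρ, G0.p_sum]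
  have hTzero_ε : T = 0 → ∀ j, ρ j - mm j = 0 := by
    intro h j
    have := (Finset.sum_eq_zero_iff_of_nonneg
      (fun j _ => by linarith [hmmρ j] : ∀ j ∈ Finset.univ, 0 ≤ ρ j - mm j)).mp (hT ▸ h)
    exact this j (Finset.mem_univ j)
  have hTzero_δ : T = 0 → ∀ j, G0.p j - mm j = 0 := by
    intro h j
    have h2 : ∑ j, (G0.p j - mm j) = 0 := by rw [hsumδ, h]
    have := (Finset.sum_eq_zero_iff_of_nonneg
      (fun j _ => by linarith [hmmp0 j] : ∀ j ∈ Finset.univ, 0 ≤ G0.p j - mm j)).mp h2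
    exact this j (Finset.mem_univ j)
  set q : Fin G.order → Fin G0.order → ℝ := fun i j =>
    G.p i * (mm (σ i) / ρ (σ i)) * (if σ i = j then 1 else 0)
    + G.p i * ((ρ (σ i) - mm (σ i)) / ρ (σ i)) * ((G0.p j - mm j) / T') with hq
  have hDmax : 0 ≤ Dmax := le_trans (hDnn ⟨0, by
      rcases Nat.eq_zero_or_pos G.order with h | h
      · exfalso
        have := G.p_sum
        rw [Finset.sum_eq_zero (fun i _ => absurd i.isLt (by omega))] at this
        · norm_num at this
      · omega⟩ ⟨0, by
      rcases Nat.eq_zero_or_pos G0.order with h | h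
      · exfalso
        have := G0.p_sum
        rw [Finset.sum_eq_zero (fun i _ => absurd i.isLt (by omega))] at this
        · norm_num at this
      · omega⟩) (hDb _ _)
  have hq_nonneg : ∀ i j, 0 ≤ q i j := by
    intro i j
    apply add_nonneg
    · apply mul_nonneg
        (mul_nonneg (le_of_lt (G.p_pos i)) (div_nonneg (hmmnn _) (hρnn _)))
      split_ifs <;> norm_num
    · apply mul_nonneg
        (mul_nonneg (le_of_lt (G.p_pos i))
          (div_nonneg (by linarith [hmmρ (σ i)]) (hρnn _)))
      exact div_nonneg (by linarith [hmmp0 j]) (le_of_lt hT'pos)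
  have hrow : ∀ i, ∑ j, q i j = G.p i := by
    intro i
    simp only [hq]
    rw [Finset.sum_add_distrib]
    have h1 : (∑ j, G.p i * (mm (σ i) / ρ (σ i)) * (if σ i = j then 1 else 0))
        = G.p i * (mm (σ i) / ρ (σ i)) := by
      simp only [mul_ite, mul_one, mul_zero]
      rw [Finset.sum_ite_eq Finset.univ (σ i) (fun _ => G.p i * (mm (σ i) / ρ (σ i)))]
      rw [if_pos (Finset.mem_univ _)]
    have h2 : (∑ j, G.p i * ((ρ (σ i) - mm (σ i)) / ρ (σ i)) * ((G0.p j - mm j) / T'))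
        = G.p i * ((ρ (σ i) - mm (σ i)) / ρ (σ i)) * (T / T') := by
      rw [← Finset.mul_sum]
      congr 1
      rw [← Finset.sum_div, hsumδ]
    rw [h1, h2]
    have hρne : ρ (σ i) ≠ 0 := ne_of_gt (hρpos i)
    by_cases hT0 : T = 0
    · have hε : ρ (σ i) - mm (σ i) = 0 := hTzero_ε hT0 (σ i)
      have hmmeq : mm (σ i) = ρ (σ i) := by linarith
      rw [hε, hmmeq, div_self hρne, zero_div, mul_zero, zero_mul, add_zero, mul_one]
    · have hTT : T / T' = 1 := by
        rw [hT', if_neg hT0, div_self hT0]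
      rw [hTT, mul_one]
      field_simp
      ring
  have hA : ∀ j, (∑ i, G.p i * (mm (σ i) / ρ (σ i)) * (if σ i = j then 1 else 0)) = mm j := by
    intro j
    have h1 : (∑ i, G.p i * (mm (σ i) / ρ (σ i)) * (if σ i = j then 1 else 0))
        = ∑ i ∈ Finset.univ.filter (fun i => σ i = j), G.p i * (mm (σ i) / ρ (σ i)) := by
      rw [Finset.sum_filter]
      apply Finset.sum_congr rfl
      intro i _
      split_ifs <;> simp
    rw [h1]
    have h2 : ∀ i ∈ Finset.univ.filter (fun i => σ i = j),
        G.p i * (mm (σ i) / ρ (σ i)) = G.p i * (mm j / ρ j) := by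
      intro i hi
      rw [(Finset.mem_filter.mp hi).2]
    rw [Finset.sum_congr rfl h2, ← Finset.sum_mul]
    have h3 : (∑ i ∈ Finset.univ.filter (fun i => σ i = j), G.p i) = ρ j := rfl
    rw [h3]
    by_cases hρ0 : ρ j = 0
    · have hmm0 : mm j = 0 := by
        rw [hmm]
        simp only [hρ0]
        exact min_eq_left (le_of_lt (G0.p_pos j))
      rw [hρ0, hmm0, zero_mul]
    · field_simp
  have hB : (∑ i, G.p i * ((ρ (σ i) - mm (σ i)) / ρ (σ i))) = T := by
    rw [← Finset.sum_fiberwise_of_maps_to (fun i (_ : i ∈ Finset.univ) => Finset.mem_univ (σ i))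
      (fun i => G.p i * ((ρ (σ i) - mm (σ i)) / ρ (σ i))), hT]
    apply Finset.sum_congr rfl
    intro j _
    have h2 : ∀ i ∈ Finset.univ.filter (fun i => σ i = j),
        G.p i * ((ρ (σ i) - mm (σ i)) / ρ (σ i)) = G.p i * ((ρ j - mm j) / ρ j) := by
      intro i hi
      rw [(Finset.mem_filter.mp hi).2]
    rw [Finset.sum_congr rfl h2, ← Finset.sum_mul]
    have h3 : (∑ i ∈ Finset.univ.filter (fun i => σ i = j), G.p i) = ρ j := rfl
    rw [h3]
    by_cases hρ0 : ρ j = 0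
    · have hmm0 : mm j = 0 := by
        rw [hmm]
        simp only [hρ0]
        exact min_eq_left (le_of_lt (G0.p_pos j))
      rw [hρ0, hmm0, zero_mul, sub_zero]
    · field_simp
  have hcol : ∀ j, ∑ i, q i j = G0.p j := by
    intro j
    simp only [hq]
    rw [Finset.sum_add_distrib, hA j]
    have h4 : (∑ i, G.p i * ((ρ (σ i) - mm (σ i)) / ρ (σ i)) * ((G0.p j - mm j) / T'))
        = T * ((G0.p j - mm j) / T') := by
      rw [← Finset.sum_mul, hB]
    rw [h4]
    by_cases hT0 : T = 0
    · have hδ : G0.p j - mm j = 0 := hTzero_δ hT0 j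
      rw [hT0, zero_mul, add_zero]
      linarith
    · have hT'eq : T' = T := by rw [hT', if_neg hT0]
      rw [hT'eq]
      field_simp
      ring
  have hcost : (∑ i, ∑ j, q i j * Dst (G.atom i) (G0.atom j) ^ r) ≤
      (∑ i, G.p i * Dst (G.atom i) (G0.atom (σ i)) ^ r) + Dmax ^ r * T := by
    have hterm : ∀ i j, q i j * Dst (G.atom i) (G0.atom j) ^ r ≤
        (G.p i * Dst (G.atom i) (G0.atom (σ i)) ^ r) * (if σ i = j then 1 else 0)
        + G.p i * ((ρ (σ i) - mm (σ i)) / ρ (σ i)) * ((G0.p j - mm j) / T') * Dmax ^ r := by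
      intro i j
      simp only [hq]
      rw [add_mul]
      apply add_le_add
      · by_cases h : σ i = j
        · subst h
          rw [if_pos rfl, mul_one, mul_one]
          have h5 : mm (σ i) / ρ (σ i) ≤ 1 := (div_le_one (hρpos i)).mpr (hmmρ (σ i))
          have h6 : 0 ≤ Dst (G.atom i) (G0.atom (σ i)) ^ r := pow_nonneg (hDnn _ _) r
          have h7 : 0 ≤ mm (σ i) / ρ (σ i) := div_nonneg (hmmnn _) (hρnn _)
          nlinarith [mul_nonneg (mul_nonneg (le_of_lt (G.p_pos i)) (sub_nonneg.mpr h5)) h6]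
        · simp [h]
      · apply mul_le_mul_of_nonneg_left (pow_le_pow_left₀ (hDnn i j) (hDb i j) r)
        apply mul_nonneg
          (mul_nonneg (le_of_lt (G.p_pos i))
            (div_nonneg (by linarith [hmmρ (σ i)]) (hρnn _)))
        exact div_nonneg (by linarith [hmmp0 j]) (le_of_lt hT'pos)
    calc (∑ i, ∑ j, q i j * Dst (G.atom i) (G0.atom j) ^ r)
        ≤ ∑ i, ∑ j, ((G.p i * Dst (G.atom i) (G0.atom (σ i)) ^ r) * (if σ i = j then 1 else 0)
          + G.p i * ((ρ (σ i) - mm (σ i)) / ρ (σ i)) * ((G0.p j - mm j) / T') * Dmax ^ r) := by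
          apply Finset.sum_le_sum
          intro i _
          apply Finset.sum_le_sum
          intro j _
          exact hterm i j
      _ = (∑ i, G.p i * Dst (G.atom i) (G0.atom (σ i)) ^ r)
          + (∑ i, G.p i * ((ρ (σ i) - mm (σ i)) / ρ (σ i))) * (T / T') * Dmax ^ r := by
          have hper : ∀ i, (∑ j,
              ((G.p i * Dst (G.atom i) (G0.atom (σ i)) ^ r) * (if σ i = j then 1 else 0)
              + G.p i * ((ρ (σ i) - mm (σ i)) / ρ (σ i)) * ((G0.p j - mm j) / T') * Dmax ^ r))
              = G.p i * Dst (G.atom i) (G0.atom (σ i)) ^ r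
                + G.p i * ((ρ (σ i) - mm (σ i)) / ρ (σ i)) * (T / T') * Dmax ^ r := by
            intro i
            rw [Finset.sum_add_distrib]
            congr 1
            · simp only [mul_ite, mul_one, mul_zero]
              rw [Finset.sum_ite_eq Finset.univ (σ i)
                (fun _ => G.p i * Dst (G.atom i) (G0.atom (σ i)) ^ r)]
              rw [if_pos (Finset.mem_univ _)]
            · have hj : ∀ j : Fin G0.order,
                  G.p i * ((ρ (σ i) - mm (σ i)) / ρ (σ i)) * ((G0.p j - mm j) / T') * Dmax ^ r
                  = (G.p i * ((ρ (σ i) - mm (σ i)) / ρ (σ i)) * Dmax ^ r / T')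
                    * (G0.p j - mm j) := by
                intro j; ring
              rw [Finset.sum_congr rfl (fun j _ => hj j), ← Finset.mul_sum, hsumδ]
              ring
          rw [Finset.sum_congr rfl (fun i _ => hper i), Finset.sum_add_distrib,
            ← Finset.sum_mul, ← Finset.sum_mul]
      _ ≤ (∑ i, G.p i * Dst (G.atom i) (G0.atom (σ i)) ^ r) + Dmax ^ r * T := by
          rw [hB]
          have hTT' : T / T' ≤ 1 := by
            by_cases hT0 : T = 0
            · rw [hT0, zero_div]; norm_num
            · rw [hT', if_neg hT0, div_self hT0]
          have h8 : T * (T / T') * Dmax ^ r ≤ T * 1 * Dmax ^ r := by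
            apply mul_le_mul_of_nonneg_right _ (pow_nonneg hDmax r)
            exact mul_le_mul_of_nonneg_left hTT' hTnn
          nlinarith [h8]
  have hmem : (∑ i, ∑ j, q i j * Dst (G.atom i) (G0.atom j) ^ r) ∈
      {c | ∃ q' ∈ couplings G G0, c = ∑ i, ∑ j, q' i j * Dst (G.atom i) (G0.atom j) ^ r} :=
    ⟨q, ⟨hq_nonneg, hrow, hcol⟩, rfl⟩
  have h1 : wassersteinPow Dst r G G0 ≤ ∑ i, ∑ j, q i j * Dst (G.atom i) (G0.atom j) ^ r :=
    csInf_le (wassersteinPow_bddBelow Dst r G G0 hDnn) hmem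
  have hTle : T ≤ ∑ j, |ρ j - G0.p j| := by
    rw [hT]
    apply Finset.sum_le_sum
    intro j _
    rcases le_total (ρ j) (G0.p j) with h | h
    · simp only [hmm]
      rw [min_eq_left h]
      simp [abs_nonneg]
    · simp only [hmm]
      rw [min_eq_right h]
      exact le_abs_self _
  have h9 : Dmax ^ r * T ≤ Dmax ^ r * ∑ j, |ρ j - G0.p j| :=
    mul_le_mul_of_nonneg_left hTle (pow_nonneg hDmax r)
  calc wassersteinPow Dst r G G0 ≤ _ := h1
    _ ≤ _ := hcost
    _ ≤ (∑ i, G.p i * Dst (G.atom i) (G0.atom (σ i)) ^ r)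
        + Dmax ^ r * ∑ j, |ρ j - G0.p j| := by linarith

/-! ### Pointwise exponent comparison lemmas -/

lemma gDist_symm {d : ℕ} (θ θ' : GaussParam d) : gDist θ θ' = gDist θ' θ := by
  unfold gDist
  congr 1
  · rw [vecNorm_eq, vecNorm_eq, toE_sub, toE_sub, norm_sub_rev]
  · rw [matNorm_eq, matNorm_eq, toEM_sub, toEM_sub, norm_sub_rev]

lemma kappa_le (u v s1 : ℝ) (hs : 0 < s1) (hu : 0 ≤ u) (hv : 0 ≤ v) (huv : s1 / 2 ≤ u + v)
    (R Mx : ℕ) (hRM : R ≤ Mx) :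
    min (min (s1 / 2) 1) (min 1 (s1 / 4) ^ Mx) ≤ u ^ (R : ℝ) + v ^ ((R : ℝ) / 2) := by
  set κ := min (min (s1 / 2) 1) (min 1 (s1 / 4) ^ Mx) with hκ
  have hm01 : 0 < min 1 (s1 / 4) := lt_min one_pos (by linarith)
  have hm11 : min 1 (s1 / 4) ≤ 1 := min_le_left _ _
  have hκ2 : κ ≤ min 1 (s1 / 4) ^ Mx := min_le_right _ _
  have hκ1 : κ ≤ 1 := le_trans (min_le_left _ _) (min_le_right _ _)
  -- generic fact: if s1/4 ≤ w and exponent e ∈ [0, Mx] then κ ≤ w ^ e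
  have key : ∀ (w : ℝ) (e : ℝ), s1 / 4 ≤ w → 0 ≤ e → e ≤ (Mx : ℝ) → κ ≤ w ^ e := by
    intro w e hw he heM
    have hw0 : 0 < w := by linarith
    rcases le_total 1 w with h1w | h1w
    · have : (1 : ℝ) ≤ w ^ e := Real.one_le_rpow h1w he
      linarith
    · -- s1/4 ≤ w ≤ 1
      have h2 : w ^ (Mx : ℝ) ≤ w ^ e :=
        Real.rpow_le_rpow_of_exponent_ge hw0 h1w heM
      have h3 : min 1 (s1 / 4) ≤ w := le_trans (min_le_right _ _) hw
      have h4 : min 1 (s1 / 4) ^ (Mx : ℝ) ≤ w ^ (Mx : ℝ) :=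
        Real.rpow_le_rpow (le_of_lt hm01) h3 (by positivity)
      have h5 : min 1 (s1 / 4) ^ (Mx : ℝ) = min 1 (s1 / 4) ^ Mx :=
        Real.rpow_natCast _ _
      linarith
  have hmax : s1 / 4 ≤ u ∨ s1 / 4 ≤ v := by
    by_contra h
    push_neg at h
    linarith [h.1, h.2]
  have hRnn : (0 : ℝ) ≤ (R : ℝ) := Nat.cast_nonneg R
  have hMle : (R : ℝ) ≤ (Mx : ℝ) := Nat.cast_le.mpr hRM
  rcases hmax with h | h
  · have := key u (R : ℝ) h hRnn hMle
    have hv2 : 0 ≤ v ^ ((R : ℝ) / 2) := Real.rpow_nonneg hv _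
    linarith
  · have := key v ((R : ℝ) / 2) h (by linarith) (by linarith)
    have hu2 : 0 ≤ u ^ (R : ℝ) := Real.rpow_nonneg hu _
    linarith

lemma rpow_le_aux (u Dmax : ℝ) (r : ℕ) (e : ℝ) (hu : 0 ≤ u) (hub : u ≤ Dmax) (h1 : 1 ≤ Dmax)
    (he0 : 0 ≤ e) (her : e ≤ (r : ℝ)) (hr : 1 ≤ r) :
    u ^ r ≤ Dmax ^ r * u ^ e := by
  rcases eq_or_lt_of_le hu with h0 | h0
  · rw [← h0]
    have hz1 : (0 : ℝ) ^ r = 0 := zero_pow (by omega)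
    rw [hz1]
    positivity
  · have key : (u : ℝ) ^ (r : ℝ) = u ^ e * u ^ ((r : ℝ) - e) := by
      rw [← Real.rpow_add h0]
      ring_nf
    have h2 : u ^ ((r : ℝ) - e) ≤ Dmax ^ ((r : ℝ) - e) :=
      Real.rpow_le_rpow (le_of_lt h0) hub (by linarith)
    have h3 : Dmax ^ ((r : ℝ) - e) ≤ Dmax ^ (r : ℝ) :=
      Real.rpow_le_rpow_of_exponent_le h1 (by linarith)
    have h4 : Dmax ^ (r : ℝ) = Dmax ^ r := Real.rpow_natCast _ _
    have h5 : (u : ℝ) ^ (r : ℕ) = u ^ (r : ℝ) := (Real.rpow_natCast _ _).symm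
    have h6 : 0 ≤ u ^ e := Real.rpow_nonneg (le_of_lt h0) _
    calc u ^ r = u ^ e * u ^ ((r : ℝ) - e) := by rw [h5, key]
      _ ≤ u ^ e * Dmax ^ ((r : ℝ) - e) := by
          exact mul_le_mul_of_nonneg_left h2 h6
      _ ≤ u ^ e * Dmax ^ r := by
          apply mul_le_mul_of_nonneg_left _ h6
          rw [← h4]; exact h3
      _ = Dmax ^ r * u ^ e := by ring

lemma pow_split (u v Dmax : ℝ) (r R : ℕ) (hu : 0 ≤ u) (hv : 0 ≤ v) (h1 : 1 ≤ Dmax)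
    (hub : u ≤ Dmax) (hvb : v ≤ Dmax) (hRr : R ≤ r) (hr : 1 ≤ r) :
    (u + v) ^ r ≤ 2 ^ r * Dmax ^ r * (u ^ (R : ℝ) + v ^ ((R : ℝ) / 2)) := by
  have hstep1 : (u + v) ^ r ≤ 2 ^ r * (u ^ r + v ^ r) := by
    rcases le_total u v with h | h
    · have h2 : (u + v) ^ r ≤ (2 * v) ^ r := by
        apply pow_le_pow_left₀ (by linarith)
        linarith
      have h3 : (2 * v) ^ r = 2 ^ r * v ^ r := mul_pow 2 v r
      have h4 : (0:ℝ) ≤ u ^ r := pow_nonneg hu r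
      have h5 : (0:ℝ) ≤ 2 ^ r := pow_nonneg (by norm_num) r
      nlinarith
    · have h2 : (u + v) ^ r ≤ (2 * u) ^ r := by
        apply pow_le_pow_left₀ (by linarith)
        linarith
      have h3 : (2 * u) ^ r = 2 ^ r * u ^ r := mul_pow 2 u r
      have h4 : (0:ℝ) ≤ v ^ r := pow_nonneg hv r
      have h5 : (0:ℝ) ≤ 2 ^ r := pow_nonneg (by norm_num) r
      nlinarith
  have hu2 : u ^ r ≤ Dmax ^ r * u ^ (R : ℝ) :=
    rpow_le_aux u Dmax r (R : ℝ) hu hub h1 (Nat.cast_nonneg R) (Nat.cast_le.mpr hRr) hr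
  have hv2 : v ^ r ≤ Dmax ^ r * v ^ ((R : ℝ) / 2) := by
    apply rpow_le_aux v Dmax r ((R : ℝ) / 2) hv hvb h1
    · positivity
    · have : (R : ℝ) ≤ (r : ℝ) := Nat.cast_le.mpr hRr
      linarith
    · exact hr
  have h5 : (0:ℝ) ≤ 2 ^ r := pow_nonneg (by norm_num) r
  calc (u + v) ^ r ≤ 2 ^ r * (u ^ r + v ^ r) := hstep1
    _ ≤ 2 ^ r * (Dmax ^ r * u ^ (R : ℝ) + Dmax ^ r * v ^ ((R : ℝ) / 2)) := by
        apply mul_le_mul_of_nonneg_left _ h5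
        linarith
    _ = 2 ^ r * Dmax ^ r * (u ^ (R : ℝ) + v ^ ((R : ℝ) / 2)) := by ring

lemma pow_single (x Dmax : ℝ) (r : ℕ) (hx : 0 ≤ x) (hxb : x ≤ Dmax) (h1 : 1 ≤ Dmax)
    (hr : 1 ≤ r) : x ^ r ≤ 2 ^ r * Dmax ^ r * x := by
  obtain ⟨r', rfl⟩ : ∃ r', r = r' + 1 := ⟨r - 1, by omega⟩
  have h2 : x ^ (r' + 1) = x ^ r' * x := by ring
  have h3 : x ^ r' ≤ Dmax ^ r' := pow_le_pow_left₀ hx hxb r'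
  have h4 : Dmax ^ r' ≤ Dmax ^ (r' + 1) := by
    calc Dmax ^ r' = Dmax ^ r' * 1 := by ring
      _ ≤ Dmax ^ r' * Dmax := by
          apply mul_le_mul_of_nonneg_left h1 (pow_nonneg (by linarith) r')
      _ = Dmax ^ (r' + 1) := by ring
  have h5 : (1:ℝ) ≤ 2 ^ (r' + 1) := one_le_pow₀ (by norm_num)
  nlinarith [mul_le_mul_of_nonneg_right h3 hx, mul_le_mul_of_nonneg_right h4 hx,
    mul_nonneg (mul_nonneg (sub_nonneg.mpr h5)
      (pow_nonneg (show (0:ℝ) ≤ Dmax by linarith) (r' + 1))) hx]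

end MH

open MH

set_option maxHeartbeats 2000000 in
/-- the loss `𝒟̄` dominates `W_{r̄}^{r̄}`, with `r̄ = r̄(k - k0 + 1)`,
for the ground metric `D((μ,Σ),(μ',Σ')) = ‖μ - μ'‖ + ‖Σ - Σ'‖`. (Note `r̄(1) = 1`, which
covers the case `k = k0`.) -/
theorem lossDbar_dominates_wasserstein
    (d : ℕ) (a : ℝ) (ha : 0 < a)
    (Ω : Set (Matrix (Fin d) (Fin d) ℝ)) (hΩ : goodScaleSet Ω)
    (k k0 : ℕ) (hk0 : 1 ≤ k0) (hk : k0 ≤ k)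
    (G0 : MixingMeasure (GaussParam d)) (hG0 : G0.memE k0 (gaussTheta a Ω)) :
    ∃ c : ℝ, 0 < c ∧
      ∀ G : MixingMeasure (GaussParam d), G.memO k (gaussTheta a Ω) →
        c * wassersteinPow gDist (rbar (k - k0 + 1)) G G0 ≤ lossDbar G G0 := by
  classical
  obtain ⟨hΩc, lo, hi, hlo, hlohi, hprop⟩ := hΩ
  obtain ⟨hG0ord, hG0mem⟩ := hG0
  have hG0pos : 0 < G0.order := by omega
  -- separation of the atoms of G0
  obtain ⟨sep, hsep_pos, hsep⟩ : ∃ s : ℝ, 0 < s ∧ ∀ j l : Fin G0.order, j ≠ l →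
      s ≤ gDist (G0.atom j) (G0.atom l) := by
    by_cases hord : G0.order ≤ 1
    · refine ⟨1, one_pos, fun j l hjl => absurd ?_ hjl⟩
      apply Fin.ext
      omega
    · have hne2 : (Finset.univ.offDiag : Finset (Fin G0.order × Fin G0.order)).Nonempty := by
        refine ⟨(⟨0, by omega⟩, ⟨1, by omega⟩), Finset.mem_offDiag.mpr
          ⟨Finset.mem_univ _, Finset.mem_univ _, ?_⟩⟩
        intro h
        have := congrArg Fin.val h
        simp at this
      obtain ⟨p, hp_mem, hp_min⟩ := Finset.exists_min_image Finset.univ.offDiag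
        (fun p => gDist (G0.atom p.1) (G0.atom p.2)) hne2
      have hpne : p.1 ≠ p.2 := (Finset.mem_offDiag.mp hp_mem).2.2
      refine ⟨gDist (G0.atom p.1) (G0.atom p.2), ?_, ?_⟩
      · rcases eq_or_lt_of_le (gDist_nonneg (G0.atom p.1) (G0.atom p.2)) with h | h
        · exact absurd (G0.atom_inj (gDist_eq_zero h.symm)) hpne
        · exact h
      · intro j l hjl
        exact hp_min (j, l) (Finset.mem_offDiag.mpr ⟨Finset.mem_univ _, Finset.mem_univ _, hjl⟩)
  obtain ⟨p0min, hp0min_pos, hp0min⟩ : ∃ pm : ℝ, 0 < pm ∧ ∀ j, pm ≤ G0.p j := by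
    obtain ⟨j, _, hj⟩ := Finset.exists_min_image Finset.univ G0.p ⟨⟨0, hG0pos⟩, Finset.mem_univ _⟩
    exact ⟨G0.p j, G0.p_pos j, fun l => hj l (Finset.mem_univ l)⟩
  have hhi : 0 < hi := lt_of_lt_of_le hlo hlohi
  set Dmax : ℝ := 2 * a * Real.sqrt d + 2 * hi * d + 1 with hDmax_def
  have hDmax1 : 1 ≤ Dmax := by
    have h1 : 0 ≤ 2 * a * Real.sqrt d := by positivity
    have h2 : 0 ≤ 2 * hi * d := by positivity
    rw [hDmax_def]
    linarith
  have hDmax0 : 0 < Dmax := by linarith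
  have hgb : ∀ θ θ' : GaussParam d, θ ∈ gaussTheta a Ω → θ' ∈ gaussTheta a Ω →
      gDist θ θ' ≤ Dmax := by
    intro θ θ' hθ hθ'
    obtain ⟨hmu1, hsig1⟩ := hθ
    obtain ⟨hmu2, hsig2⟩ := hθ'
    have h1 : vecNorm (θ.1 - θ'.1) ≤ 2 * a * Real.sqrt d := by
      apply vecNorm_le_of_bound (by linarith)
      intro i
      have ha1 := hmu1 i
      have ha2 := hmu2 i
      rw [Set.mem_Icc] at ha1 ha2
      rw [Pi.sub_apply, abs_le]
      constructor <;> linarith [ha1.1, ha1.2, ha2.1, ha2.2]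
    have h2 : matNorm (θ.2 - θ'.2) ≤ 2 * hi * d := by
      have hb := entry_bound hlo hlohi hprop
      have h2b := fun i j => hb θ.2 hsig1 i j
      have h2c := fun i j => hb θ'.2 hsig2 i j
      apply matNorm_le_of_bound (by linarith)
      intro i j
      rw [Matrix.sub_apply]
      have h3 : |θ.2 i j - θ'.2 i j| ≤ |θ.2 i j| + |θ'.2 i j| := by
        rw [sub_eq_add_neg]
        calc |θ.2 i j + -θ'.2 i j| ≤ |θ.2 i j| + |-θ'.2 i j| := abs_add_le _ _
          _ = |θ.2 i j| + |θ'.2 i j| := by rw [abs_neg]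
      linarith [h2b i j, h2c i j]
    show vecNorm (θ.1 - θ'.1) + matNorm (θ.2 - θ'.2) ≤ Dmax
    rw [hDmax_def]
    linarith
  set r := rbar (k - k0 + 1) with hr_def
  have hr1 : 1 ≤ r := rbar_pos _
  set Mx := Finset.sup (Finset.range (k + 1)) rbar with hMx
  set κ := min (min (sep / 2) 1) (min 1 (sep / 4) ^ Mx) with hκdef
  have hκpos : 0 < κ := by
    apply lt_min (lt_min (by linarith) one_pos)
    apply pow_pos (lt_min one_pos (by linarith))
  have hκ1 : κ ≤ 1 := le_trans (min_le_left _ _) (min_le_right _ _)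
  have hκsep : κ ≤ sep / 2 := le_trans (min_le_left _ _) (min_le_left _ _)
  set C1 : ℝ := 2 ^ r * Dmax ^ r with hC1
  have hDr_pos : (0:ℝ) < Dmax ^ r := pow_pos hDmax0 r
  have hDr1 : (1:ℝ) ≤ Dmax ^ r := one_le_pow₀ hDmax1
  have hC1pos : 0 < C1 := mul_pos (pow_pos two_pos r) hDr_pos
  set K : ℝ := C1 + Dmax ^ r * (1 + (k0 : ℝ) / κ) with hK
  have hKpos : 0 < K := by
    have h0 : 0 < 1 + (k0 : ℝ) / κ := by positivity
    rw [hK]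
    have := mul_pos hDr_pos h0
    linarith
  set ε0 : ℝ := κ * p0min / 2 with hε0
  have hε0pos : 0 < ε0 := by rw [hε0]; positivity
  refine ⟨min (1 / K) (ε0 / (3 * Dmax ^ r)),
    lt_min (by positivity) (by positivity), ?_⟩
  intro G hG
  obtain ⟨hGord, hGatom⟩ := hG
  have hn_pos : 0 < G.order := by
    by_contra h
    push_neg at h
    have h2 := G.p_sum
    rw [Finset.sum_eq_zero (fun i _ => absurd i.isLt (by omega))] at h2
    norm_num at h2
  have hexists : ∀ i : Fin G.order, ∃ j : Fin G0.order,
      ∀ l, gDist (G.atom i) (G0.atom j) ≤ gDist (G.atom i) (G0.atom l) := by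
    intro i
    obtain ⟨j, _, hj⟩ := Finset.exists_min_image Finset.univ
      (fun j => gDist (G.atom i) (G0.atom j)) ⟨⟨0, hG0pos⟩, Finset.mem_univ _⟩
    exact ⟨j, fun l => hj l (Finset.mem_univ l)⟩
  choose σ hσ using hexists
  have hmemA : ∀ i, i ∈ voronoiD gDist G G0 (σ i) := fun i =>
    Finset.mem_filter.mpr ⟨Finset.mem_univ i, hσ i⟩
  have hmemA' : ∀ i j, i ∈ voronoiD gDist G G0 j →
      ∀ l, gDist (G.atom i) (G0.atom j) ≤ gDist (G.atom i) (G0.atom l) := by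
    intro i j hij
    exact (Finset.mem_filter.mp hij).2
  set Br : Fin G0.order → ℝ := fun j =>
    if (voronoiD gDist G G0 j).card = 1
      then ∑ i ∈ voronoiD gDist G G0 j, G.p i *
        (vecNorm ((G.atom i).1 - (G0.atom j).1) + matNorm ((G.atom i).2 - (G0.atom j).2))
      else if 1 < (voronoiD gDist G G0 j).card
      then ∑ i ∈ voronoiD gDist G G0 j, G.p i *
        (vecNorm ((G.atom i).1 - (G0.atom j).1) ^ (rbar (voronoiD gDist G G0 j).card : ℝ)
          + matNorm ((G.atom i).2 - (G0.atom j).2)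
            ^ ((rbar (voronoiD gDist G G0 j).card : ℝ) / 2))
      else 0 with hBr
  set L1 : ℝ := ∑ j, Br j with hL1def
  set L2 : ℝ := ∑ j, |(∑ i ∈ voronoiD gDist G G0 j, G.p i) - G0.p j| with hL2def
  have hloss : lossDbar G G0 = L1 + L2 := rfl
  have hx_nonneg : ∀ (i : Fin G.order) (j : Fin G0.order),
      0 ≤ gDist (G.atom i) (G0.atom j) := fun i j => gDist_nonneg _ _
  have hxb : ∀ (i : Fin G.order) (j : Fin G0.order), gDist (G.atom i) (G0.atom j) ≤ Dmax :=
    fun i j => hgb _ _ (hGatom i) (hG0mem j)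
  have hx_split : ∀ (i : Fin G.order) (j : Fin G0.order), gDist (G.atom i) (G0.atom j)
      = vecNorm ((G.atom i).1 - (G0.atom j).1) + matNorm ((G.atom i).2 - (G0.atom j).2) := by
    intro i j
    rfl
  have hcardk : ∀ j, (voronoiD gDist G G0 j).card ≤ k := by
    intro j
    apply le_trans (Finset.card_le_univ _)
    simpa using hGord
  have hRM : ∀ j, rbar ((voronoiD gDist G G0 j).card) ≤ Mx := by
    intro j
    apply Finset.le_sup
    rw [Finset.mem_range]
    have := hcardk j
    omega
  have hBr_nonneg : ∀ j, 0 ≤ Br j := by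
    intro j
    simp only [hBr]
    split_ifs
    · apply Finset.sum_nonneg
      intro i _
      apply mul_nonneg (le_of_lt (G.p_pos i))
      exact add_nonneg (vecNorm_nonneg _) (matNorm_nonneg _)
    · apply Finset.sum_nonneg
      intro i _
      apply mul_nonneg (le_of_lt (G.p_pos i))
      exact add_nonneg (Real.rpow_nonneg (vecNorm_nonneg _) _)
        (Real.rpow_nonneg (matNorm_nonneg _) _)
    · exact le_refl 0
  have hL1_nonneg : 0 ≤ L1 := Finset.sum_nonneg fun j _ => hBr_nonneg j
  have hL2_nonneg : 0 ≤ L2 := Finset.sum_nonneg fun j _ => abs_nonneg _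
  have hbranch_ge : ∀ (j : Fin G0.order) (W : Finset (Fin G.order)),
      W ⊆ voronoiD gDist G G0 j →
      (∀ i ∈ W, sep / 2 ≤ gDist (G.atom i) (G0.atom j)) →
      κ * ∑ i ∈ W, G.p i ≤ Br j := by
    intro j W hWsub hWd
    simp only [hBr]
    rw [Finset.mul_sum]
    split_ifs with h1 h2
    · calc (∑ i ∈ W, κ * G.p i)
          ≤ ∑ i ∈ W, G.p i * (vecNorm ((G.atom i).1 - (G0.atom j).1)
            + matNorm ((G.atom i).2 - (G0.atom j).2)) := by
            apply Finset.sum_le_sum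
            intro i hi
            have h3 := hWd i hi
            rw [hx_split i j] at h3
            nlinarith [G.p_pos i, hκsep]
        _ ≤ _ := by
            apply Finset.sum_le_sum_of_subset_of_nonneg hWsub
            intro i _ _
            exact mul_nonneg (le_of_lt (G.p_pos i))
              (add_nonneg (vecNorm_nonneg _) (matNorm_nonneg _))
    · calc (∑ i ∈ W, κ * G.p i)
          ≤ ∑ i ∈ W, G.p i *
            (vecNorm ((G.atom i).1 - (G0.atom j).1) ^ (rbar (voronoiD gDist G G0 j).card : ℝ)
              + matNorm ((G.atom i).2 - (G0.atom j).2)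
                ^ ((rbar (voronoiD gDist G G0 j).card : ℝ) / 2)) := by
            apply Finset.sum_le_sum
            intro i hi
            have h3 := hWd i hi
            rw [hx_split i j] at h3
            have h4 := kappa_le (vecNorm ((G.atom i).1 - (G0.atom j).1))
              (matNorm ((G.atom i).2 - (G0.atom j).2)) sep hsep_pos
              (vecNorm_nonneg _) (matNorm_nonneg _) h3
              (rbar (voronoiD gDist G G0 j).card) Mx (hRM j)
            rw [← hκdef] at h4
            nlinarith [G.p_pos i, hκpos]
        _ ≤ _ := by
            apply Finset.sum_le_sum_of_subset_of_nonneg hWsub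
            intro i _ _
            exact mul_nonneg (le_of_lt (G.p_pos i))
              (add_nonneg (Real.rpow_nonneg (vecNorm_nonneg _) _)
                (Real.rpow_nonneg (matNorm_nonneg _) _))
    · have hcard0 : (voronoiD gDist G G0 j).card = 0 := by omega
      have hWempty : W = ∅ := Finset.subset_empty.mp
        (Finset.card_eq_zero.mp hcard0 ▸ hWsub)
      rw [hWempty]
      simp
  set tcnt : Fin G.order → ℕ :=
    fun i => (Finset.univ.filter (fun j => i ∈ voronoiD gDist G G0 j)).card with htcnt
  have ht1 : ∀ i, 1 ≤ tcnt i := by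
    intro i
    apply Finset.card_pos.mpr
    exact ⟨σ i, Finset.mem_filter.mpr ⟨Finset.mem_univ _, hmemA i⟩⟩
  have htk0 : ∀ i, tcnt i ≤ G0.order := by
    intro i
    rw [htcnt]
    exact le_trans (Finset.card_le_univ _) (by simp)
  set Tied : Finset (Fin G.order) := Finset.univ.filter (fun i => 2 ≤ tcnt i) with hTied
  have htied_dist : ∀ i j, i ∈ voronoiD gDist G G0 j → i ∈ Tied →
      sep / 2 ≤ gDist (G.atom i) (G0.atom j) := by
    intro i j hij hT
    rw [hTied, Finset.mem_filter] at hT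
    obtain ⟨l, hl_mem, hlj⟩ : ∃ l, i ∈ voronoiD gDist G G0 l ∧ l ≠ j := by
      by_contra hcon
      push_neg at hcon
      have hsub : Finset.univ.filter (fun l => i ∈ voronoiD gDist G G0 l) ⊆ {j} := by
        intro l hl
        rw [Finset.mem_filter] at hl
        rw [Finset.mem_singleton]
        exact hcon l hl.2
      have hcard := Finset.card_le_card hsub
      rw [Finset.card_singleton] at hcard
      have h6 := hT.2
      simp only [htcnt] at h6
      omega
    have h1 := hmemA' i j hij l
    have h2 := hmemA' i l hl_mem j
    have h3 := hsep l j hlj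
    have h4 := gDist_triangle (G0.atom l) (G.atom i) (G0.atom j)
    have h5 := gDist_symm (G0.atom l) (G.atom i)
    linarith
  have htied_mass : κ * ∑ i ∈ Tied, G.p i ≤ L1 := by
    have h1 : ∀ j, κ * (∑ i ∈ Tied.filter (fun i => σ i = j), G.p i) ≤ Br j := by
      intro j
      apply hbranch_ge j
      · intro i hi
        rw [Finset.mem_filter] at hi
        rw [← hi.2]
        exact hmemA i
      · intro i hi
        rw [Finset.mem_filter] at hi
        rw [← hi.2]
        exact htied_dist i (σ i) (hmemA i) hi.1
    have h2 : (∑ i ∈ Tied, G.p i) = ∑ j, ∑ i ∈ Tied.filter (fun i => σ i = j), G.p i :=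
      (Finset.sum_fiberwise_of_maps_to (fun i _ => Finset.mem_univ (σ i)) G.p).symm
    rw [hL1def, h2, Finset.mul_sum]
    exact Finset.sum_le_sum fun j _ => h1 j
  have hSS : (∑ j, ∑ i ∈ voronoiD gDist G G0 j, G.p i) = ∑ i, (tcnt i : ℝ) * G.p i := by
    have h1 : ∀ j : Fin G0.order, (∑ i ∈ voronoiD gDist G G0 j, G.p i)
        = ∑ i, if i ∈ voronoiD gDist G G0 j then G.p i else 0 := by
      intro j
      exact Eq.symm (by rw [Finset.sum_ite_mem, Finset.univ_inter])
    rw [Finset.sum_congr rfl (fun j _ => h1 j), Finset.sum_comm]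
    apply Finset.sum_congr rfl
    intro i _
    rw [show (∑ j, if i ∈ voronoiD gDist G G0 j then G.p i else 0)
        = ∑ j ∈ Finset.univ.filter (fun j => i ∈ voronoiD gDist G G0 j), G.p i from
      (Finset.sum_filter _ _).symm]
    rw [Finset.sum_const, htcnt, nsmul_eq_mul]
  have hmass : (∑ j, ∑ i ∈ voronoiD gDist G G0 j, G.p i)
      ≤ 1 + (k0 : ℝ) * ∑ i ∈ Tied, G.p i := by
    rw [hSS]
    have h1 : ∀ i, (tcnt i : ℝ) * G.p i
        ≤ G.p i + (if i ∈ Tied then (k0 : ℝ) * G.p i else 0) := by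
      intro i
      by_cases h : i ∈ Tied
      · rw [if_pos h]
        have h2 : (tcnt i : ℝ) ≤ (k0 : ℝ) := by
          exact_mod_cast hG0ord ▸ htk0 i
        nlinarith [G.p_pos i, mul_le_mul_of_nonneg_right h2 (le_of_lt (G.p_pos i))]
      · rw [if_neg h]
        have h2 : tcnt i = 1 := by
          rw [hTied, Finset.mem_filter] at h
          push_neg at h
          have h3 := h (Finset.mem_univ i)
          have h4 := ht1 i
          omega
        rw [h2]
        simp
    calc (∑ i, (tcnt i : ℝ) * G.p i)
        ≤ ∑ i, (G.p i + (if i ∈ Tied then (k0 : ℝ) * G.p i else 0)) :=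
          Finset.sum_le_sum fun i _ => h1 i
      _ = 1 + (k0 : ℝ) * ∑ i ∈ Tied, G.p i := by
          rw [Finset.sum_add_distrib, G.p_sum, Finset.sum_ite_mem, Finset.univ_inter,
            Finset.mul_sum]
  set ρf : Fin G0.order → ℝ :=
    fun j => ∑ i ∈ Finset.univ.filter (fun i => σ i = j), G.p i with hρf
  have hρS : ∀ j, ρf j ≤ ∑ i ∈ voronoiD gDist G G0 j, G.p i := by
    intro j
    apply Finset.sum_le_sum_of_subset_of_nonneg
    · intro i hi
      rw [Finset.mem_filter] at hi
      rw [← hi.2]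
      exact hmemA i
    · intro i _ _
      exact le_of_lt (G.p_pos i)
  have hρsum : (∑ j, ρf j) = 1 := by
    simp only [hρf]
    rw [Finset.sum_fiberwise_of_maps_to (fun i _ => Finset.mem_univ (σ i)) G.p]
    exact G.p_sum
  have hmismatch : (∑ j, |ρf j - G0.p j|)
      ≤ L2 + ((∑ j, ∑ i ∈ voronoiD gDist G G0 j, G.p i) - 1) := by
    have h1 : ∀ j, |ρf j - G0.p j|
        ≤ |(∑ i ∈ voronoiD gDist G G0 j, G.p i) - G0.p j|
          + ((∑ i ∈ voronoiD gDist G G0 j, G.p i) - ρf j) := by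
      intro j
      have h2 : ρf j - G0.p j = ((∑ i ∈ voronoiD gDist G G0 j, G.p i) - G0.p j)
          + -((∑ i ∈ voronoiD gDist G G0 j, G.p i) - ρf j) := by ring
      rw [h2]
      calc |((∑ i ∈ voronoiD gDist G G0 j, G.p i) - G0.p j)
            + -((∑ i ∈ voronoiD gDist G G0 j, G.p i) - ρf j)|
          ≤ |(∑ i ∈ voronoiD gDist G G0 j, G.p i) - G0.p j|
            + |-((∑ i ∈ voronoiD gDist G G0 j, G.p i) - ρf j)| := abs_add_le _ _
        _ = |(∑ i ∈ voronoiD gDist G G0 j, G.p i) - G0.p j|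
            + ((∑ i ∈ voronoiD gDist G G0 j, G.p i) - ρf j) := by
            have h3 : 0 ≤ (∑ i ∈ voronoiD gDist G G0 j, G.p i) - ρf j := by
              linarith [hρS j]
            rw [abs_neg, abs_of_nonneg h3]
    calc (∑ j, |ρf j - G0.p j|)
        ≤ ∑ j, (|(∑ i ∈ voronoiD gDist G G0 j, G.p i) - G0.p j|
          + ((∑ i ∈ voronoiD gDist G G0 j, G.p i) - ρf j)) :=
          Finset.sum_le_sum fun j _ => h1 j
      _ = L2 + ((∑ j, ∑ i ∈ voronoiD gDist G G0 j, G.p i) - 1) := by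
          rw [Finset.sum_add_distrib, Finset.sum_sub_distrib, hρsum, hL2def]
  have hW := wass_le_assignment gDist r G G0 σ Dmax hx_nonneg hxb
  have hW' : wassersteinPow gDist r G G0
      ≤ (∑ i, G.p i * gDist (G.atom i) (G0.atom (σ i)) ^ r)
        + Dmax ^ r * ∑ j, |ρf j - G0.p j| := hW
  have hWnn : 0 ≤ wassersteinPow gDist r G G0 := wassersteinPow_nonneg _ _ _ _ hx_nonneg
  by_cases hbad : ∃ j, k - k0 + 1 < (voronoiD gDist G G0 j).card
  · -- a cell is too large: the loss is bounded below by a constant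
    obtain ⟨j0, hj0⟩ := hbad
    have hk02 : 2 ≤ k0 := by
      have h1 := hcardk j0
      omega
    set B : Finset (Fin G.order) := (voronoiD gDist G G0 j0)ᶜ with hB
    have hBcard : B.card ≤ k0 - 2 := by
      rw [hB, Finset.card_compl]
      simp only [Fintype.card_fin]
      have h1 := hcardk j0
      have h2 : G.order ≤ k := hGord
      omega
    have huntied : ∀ i, i ∉ Tied → ∀ l1 l2, i ∈ voronoiD gDist G G0 l1 →
        i ∈ voronoiD gDist G G0 l2 → l1 = l2 := by
      intro i hiT l1 l2 hm1 hm2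
      by_contra hne
      apply hiT
      rw [hTied, Finset.mem_filter]
      refine ⟨Finset.mem_univ _, ?_⟩
      have hsub : ({l1, l2} : Finset (Fin G0.order))
          ⊆ Finset.univ.filter (fun j => i ∈ voronoiD gDist G G0 j) := by
        intro l hl
        rw [Finset.mem_insert, Finset.mem_singleton] at hl
        rcases hl with rfl | rfl <;>
          exact Finset.mem_filter.mpr ⟨Finset.mem_univ _, by assumption⟩
      have hc2 : ({l1, l2} : Finset (Fin G0.order)).card = 2 := Finset.card_pair hne
      have hc3 := Finset.card_le_card hsub
      rw [hc2] at hc3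
      simpa only [htcnt] using hc3
    have hpig : ∃ l : Fin G0.order, l ≠ j0 ∧ ∀ i ∈ voronoiD gDist G G0 l, i ∈ Tied := by
      by_contra hcon
      push_neg at hcon
      choose f hf1 hf2 using hcon
      set i0 : Fin G.order := ⟨0, hn_pos⟩ with hi0
      set g : Fin G0.order → Fin G.order := fun l => if h : l = j0 then i0 else f l h with hg
      have hgmem : ∀ l ∈ Finset.univ.erase j0, g l ∈ B := by
        intro l hl
        have hlne : l ≠ j0 := (Finset.mem_erase.mp hl).1
        rw [hg]
        simp only [dif_neg hlne]
        rw [hB, Finset.mem_compl]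
        intro hmem0
        exact hlne (huntied (f l hlne) (hf2 l hlne) l j0 (hf1 l hlne) hmem0)
      have hginj : Set.InjOn g (Finset.univ.erase j0) := by
        intro l1 hl1 l2 hl2 heq
        rw [Finset.coe_erase, Set.mem_diff] at hl1 hl2
        have hl1ne : l1 ≠ j0 := by simpa using hl1.2
        have hl2ne : l2 ≠ j0 := by simpa using hl2.2
        rw [hg] at heq
        simp only [dif_neg hl1ne, dif_neg hl2ne] at heq
        have hm1 := hf1 l1 hl1ne
        have hm2 := hf1 l2 hl2ne
        rw [heq] at hm1
        exact huntied (f l2 hl2ne) (hf2 l2 hl2ne) l1 l2 hm1 hm2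
      have hcard2 := Finset.card_le_card_of_injOn g hgmem hginj
      rw [Finset.card_erase_of_mem (Finset.mem_univ j0)] at hcard2
      simp only [Finset.card_univ, Fintype.card_fin] at hcard2
      omega
    obtain ⟨l, hlj0, hlT⟩ := hpig
    have hSl : (∑ i ∈ voronoiD gDist G G0 l, G.p i) ≤ ∑ i ∈ Tied, G.p i := by
      apply Finset.sum_le_sum_of_subset_of_nonneg (fun i hi => hlT i hi)
      intro i _ _
      exact le_of_lt (G.p_pos i)
    have hL2ge : p0min - L1 / κ ≤ L2 := by
      have h1 : |(∑ i ∈ voronoiD gDist G G0 l, G.p i) - G0.p l| ≤ L2 := by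
        rw [hL2def]
        exact Finset.single_le_sum
          (f := fun j => |(∑ i ∈ voronoiD gDist G G0 j, G.p i) - G0.p j|)
          (fun j _ => abs_nonneg _) (Finset.mem_univ l)
      have h2 : G0.p l - (∑ i ∈ voronoiD gDist G G0 l, G.p i)
          ≤ |(∑ i ∈ voronoiD gDist G G0 l, G.p i) - G0.p l| := by
        rw [abs_sub_comm]
        exact le_abs_self _
      have h3 : (∑ i ∈ Tied, G.p i) ≤ L1 / κ := by
        rw [le_div_iff₀ hκpos]
        linarith [htied_mass]
      have h4 := hp0min l
      linarith
    have hlossge : ε0 ≤ lossDbar G G0 := by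
      rw [hloss, hε0]
      rcases le_or_gt (κ * p0min / 2) L1 with h | h
      · linarith
      · have h5 : L1 / κ < p0min / 2 := by
          rw [div_lt_iff₀ hκpos]
          nlinarith
        nlinarith [hL2ge, hL1_nonneg, hκ1, hp0min_pos]
    have hWb : wassersteinPow gDist r G G0 ≤ 3 * Dmax ^ r := by
      apply le_trans hW'
      have h1 : (∑ i, G.p i * gDist (G.atom i) (G0.atom (σ i)) ^ r) ≤ Dmax ^ r := by
        calc (∑ i, G.p i * gDist (G.atom i) (G0.atom (σ i)) ^ r)
            ≤ ∑ i, G.p i * Dmax ^ r := by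
              apply Finset.sum_le_sum
              intro i _
              exact mul_le_mul_of_nonneg_left
                (pow_le_pow_left₀ (hx_nonneg _ _) (hxb _ _) r) (le_of_lt (G.p_pos i))
          _ = Dmax ^ r := by rw [← Finset.sum_mul, G.p_sum, one_mul]
      have h2 : (∑ j, |ρf j - G0.p j|) ≤ 2 := by
        have h3 : ∀ j, |ρf j - G0.p j| ≤ ρf j + G0.p j := by
          intro j
          rw [sub_eq_add_neg]
          refine le_trans (abs_add_le _ _) ?_
          rw [abs_neg, abs_of_nonneg (Finset.sum_nonneg fun i _ => le_of_lt (G.p_pos i)),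
            abs_of_nonneg (le_of_lt (G0.p_pos j))]
        calc (∑ j, |ρf j - G0.p j|) ≤ ∑ j, (ρf j + G0.p j) := Finset.sum_le_sum fun j _ => h3 j
          _ = 2 := by rw [Finset.sum_add_distrib, hρsum, G0.p_sum]; norm_num
      have h4 : Dmax ^ r * (∑ j, |ρf j - G0.p j|) ≤ Dmax ^ r * 2 :=
        mul_le_mul_of_nonneg_left h2 (le_of_lt hDr_pos)
      linarith
    calc min (1 / K) (ε0 / (3 * Dmax ^ r)) * wassersteinPow gDist r G G0
        ≤ (ε0 / (3 * Dmax ^ r)) * (3 * Dmax ^ r) := by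
          apply mul_le_mul (min_le_right _ _) hWb hWnn (by positivity)
      _ = ε0 := by field_simp
      _ ≤ lossDbar G G0 := hlossge
  · -- all cells have at most k - k0 + 1 atoms
    push_neg at hbad
    have hcell : ∀ j, (∑ i ∈ voronoiD gDist G G0 j, G.p i * gDist (G.atom i) (G0.atom j) ^ r)
        ≤ C1 * Br j := by
      intro j
      simp only [hBr]
      split_ifs with h1 h2
      · rw [Finset.mul_sum]
        apply Finset.sum_le_sum
        intro i _
        have h3 := pow_single (gDist (G.atom i) (G0.atom j)) Dmax r (hx_nonneg i j) (hxb i j)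
          hDmax1 hr1
        calc G.p i * gDist (G.atom i) (G0.atom j) ^ r
            ≤ G.p i * (2 ^ r * Dmax ^ r * gDist (G.atom i) (G0.atom j)) :=
              mul_le_mul_of_nonneg_left h3 (le_of_lt (G.p_pos i))
          _ = C1 * (G.p i * (vecNorm ((G.atom i).1 - (G0.atom j).1)
              + matNorm ((G.atom i).2 - (G0.atom j).2))) := by
              rw [← hx_split i j, hC1]; ring
      · rw [Finset.mul_sum]
        apply Finset.sum_le_sum
        intro i _
        have hub : vecNorm ((G.atom i).1 - (G0.atom j).1) ≤ Dmax := by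
          have h4 := hxb i j
          rw [hx_split i j] at h4
          linarith [matNorm_nonneg ((G.atom i).2 - (G0.atom j).2)]
        have hvb : matNorm ((G.atom i).2 - (G0.atom j).2) ≤ Dmax := by
          have h4 := hxb i j
          rw [hx_split i j] at h4
          linarith [vecNorm_nonneg ((G.atom i).1 - (G0.atom j).1)]
        have hRr : rbar ((voronoiD gDist G G0 j).card) ≤ r := by
          rw [hr_def]
          exact rbar_mono (hbad j)
        have h3 := pow_split (vecNorm ((G.atom i).1 - (G0.atom j).1))
          (matNorm ((G.atom i).2 - (G0.atom j).2)) Dmax r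
          (rbar ((voronoiD gDist G G0 j).card))
          (vecNorm_nonneg _) (matNorm_nonneg _) hDmax1 hub hvb hRr hr1
        calc G.p i * gDist (G.atom i) (G0.atom j) ^ r
            = G.p i * (vecNorm ((G.atom i).1 - (G0.atom j).1)
              + matNorm ((G.atom i).2 - (G0.atom j).2)) ^ r := by rw [hx_split i j]
          _ ≤ G.p i * (2 ^ r * Dmax ^ r *
              (vecNorm ((G.atom i).1 - (G0.atom j).1)
                  ^ ((rbar ((voronoiD gDist G G0 j).card) : ℕ) : ℝ)
                + matNorm ((G.atom i).2 - (G0.atom j).2)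
                  ^ (((rbar ((voronoiD gDist G G0 j).card) : ℕ) : ℝ) / 2))) :=
              mul_le_mul_of_nonneg_left h3 (le_of_lt (G.p_pos i))
          _ = C1 * (G.p i * (vecNorm ((G.atom i).1 - (G0.atom j).1)
                ^ ((rbar ((voronoiD gDist G G0 j).card) : ℕ) : ℝ)
              + matNorm ((G.atom i).2 - (G0.atom j).2)
                ^ (((rbar ((voronoiD gDist G G0 j).card) : ℕ) : ℝ) / 2))) := by
              rw [hC1]; ring
      · have hcard0 : (voronoiD gDist G G0 j).card = 0 := by omega
        rw [Finset.card_eq_zero.mp hcard0]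
        simp
    have hP2 : (∑ i, G.p i * gDist (G.atom i) (G0.atom (σ i)) ^ r)
        ≤ ∑ j, ∑ i ∈ voronoiD gDist G G0 j, G.p i * gDist (G.atom i) (G0.atom j) ^ r := by
      rw [← Finset.sum_fiberwise_of_maps_to (fun i (_ : i ∈ Finset.univ) => Finset.mem_univ (σ i))
        (fun i => G.p i * gDist (G.atom i) (G0.atom (σ i)) ^ r)]
      apply Finset.sum_le_sum
      intro j _
      have he : ∀ i ∈ Finset.univ.filter (fun i => σ i = j),
          G.p i * gDist (G.atom i) (G0.atom (σ i)) ^ r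
          = G.p i * gDist (G.atom i) (G0.atom j) ^ r := by
        intro i hi
        rw [(Finset.mem_filter.mp hi).2]
      rw [Finset.sum_congr rfl he]
      apply Finset.sum_le_sum_of_subset_of_nonneg
      · intro i hi
        rw [Finset.mem_filter] at hi
        rw [← hi.2]
        exact hmemA i
      · intro i _ _
        exact mul_nonneg (le_of_lt (G.p_pos i)) (pow_nonneg (hx_nonneg _ _) r)
    have hCL1 : (∑ j, ∑ i ∈ voronoiD gDist G G0 j, G.p i * gDist (G.atom i) (G0.atom j) ^ r)
        ≤ C1 * L1 := by
      rw [hL1def, Finset.mul_sum]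
      exact Finset.sum_le_sum fun j _ => hcell j
    have hchain : wassersteinPow gDist r G G0 ≤ K * (L1 + L2) := by
      have h7 : (∑ i ∈ Tied, G.p i) ≤ L1 / κ := by
        rw [le_div_iff₀ hκpos]
        linarith [htied_mass]
      have h6 : (∑ j, ∑ i ∈ voronoiD gDist G G0 j, G.p i) - 1 ≤ (k0 : ℝ) * (L1 / κ) := by
        have h8 := hmass
        have h9 : (k0 : ℝ) * (∑ i ∈ Tied, G.p i) ≤ (k0 : ℝ) * (L1 / κ) :=
          mul_le_mul_of_nonneg_left h7 (Nat.cast_nonneg k0)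
        linarith
      have h9 : (∑ j, |ρf j - G0.p j|) ≤ L2 + (k0 : ℝ) * (L1 / κ) := by
        linarith [hmismatch]
      have h10 : Dmax ^ r * (∑ j, |ρf j - G0.p j|)
          ≤ Dmax ^ r * L2 + Dmax ^ r * ((k0 : ℝ) / κ) * L1 := by
        have h11 : Dmax ^ r * (∑ j, |ρf j - G0.p j|)
            ≤ Dmax ^ r * (L2 + (k0 : ℝ) * (L1 / κ)) :=
          mul_le_mul_of_nonneg_left h9 (le_of_lt hDr_pos)
        have h12 : Dmax ^ r * (L2 + (k0 : ℝ) * (L1 / κ))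
            = Dmax ^ r * L2 + Dmax ^ r * ((k0 : ℝ) / κ) * L1 := by ring
        linarith
      have hexpand : K * (L1 + L2) = C1 * L1 + C1 * L2 + Dmax ^ r * L1
          + Dmax ^ r * ((k0 : ℝ) / κ) * L1 + Dmax ^ r * L2
          + Dmax ^ r * ((k0 : ℝ) / κ) * L2 := by
        rw [hK]; ring
      have e1 : 0 ≤ C1 * L2 := mul_nonneg (le_of_lt hC1pos) hL2_nonneg
      have e2 : 0 ≤ Dmax ^ r * L1 := mul_nonneg (le_of_lt hDr_pos) hL1_nonneg
      have e3 : 0 ≤ Dmax ^ r * ((k0 : ℝ) / κ) * L2 := by positivity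
      have hA1 : (∑ i, G.p i * gDist (G.atom i) (G0.atom (σ i)) ^ r) ≤ C1 * L1 :=
        le_trans hP2 hCL1
      rw [hexpand]
      linarith [hW', hA1, h10]
    calc min (1 / K) (ε0 / (3 * Dmax ^ r)) * wassersteinPow gDist r G G0
        ≤ (1 / K) * wassersteinPow gDist r G G0 :=
          mul_le_mul_of_nonneg_right (min_le_left _ _) hWnn
      _ ≤ (1 / K) * (K * (L1 + L2)) :=
          mul_le_mul_of_nonneg_left hchain (by positivity)
      _ = L1 + L2 := by field_simp
      _ = lossDbar G G0 := hloss.symm
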